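/- arXiv:math/0503120 — 5 statements merged into one kernel-verified Lean document; each statement's English description precedes it below -/
import Mathlib

section
/- Let 0 < q < 1, let ν be a positive integer and let z ∈ D_q. Then for every t ∈ R_q(z) the series t^ν·Σ_{n=0}^∞ q^{−ν(n+z)}·exp(−t·q^{−(n+z)}·[n+z]_q) defining F_q^{+,ν}(t,z) converges absolutely, and the function t ↦ F_q^{+,ν}(t,z) is holomorphic on the open set R_q(z). -/
open Complex MeasureTheory

/-- `q^w := exp(w · log q)` with the real logarithm of `q`. -/
noncomputable def qpow (q : ℝ) (w : ℂ) : ℂ := Complex.exp (w * Real.log q)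

/-- `[w]_q := (1 - q^w)/(1 - q)`. -/
noncomputable def qbr (q : ℝ) (w : ℂ) : ℂ := (1 - qpow q w) / (1 - (q : ℂ))

/-- the `n`-th term of the series defining `F_q^{+,ν}(t,z)`. -/
noncomputable def FpTerm (q : ℝ) (ν : ℕ) (t z : ℂ) (n : ℕ) : ℂ :=
  qpow q (-(ν : ℂ) * ((n : ℂ) + z)) *
    Complex.exp (-t * qpow q (-((n : ℂ) + z)) * qbr q ((n : ℂ) + z))

/-- `F_q^{+,ν}(t,z)`. -/
noncomputable def Fp (q : ℝ) (ν : ℕ) (t z : ℂ) : ℂ := t ^ ν * ∑' n : ℕ, FpTerm q ν t z n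

lemma norm_FpTerm {q : ℝ} (hq1 : q < 1) (ν : ℕ) (t z : ℂ) (n : ℕ) :
    ‖FpTerm q ν t z n‖ =
      Real.exp (-((ν:ℝ) * ((n:ℝ) + z.re)) * Real.log q) *
      Real.exp ((t.re - Real.exp (-((n:ℝ) + z.re) * Real.log q) *
        (t * Complex.exp (-(z.im * Real.log q) * Complex.I)).re) / (1 - q)) := by
  set L := Real.log q with hL
  have hq1' : (1:ℂ) - (q:ℂ) ≠ 0 := sub_ne_zero.mpr (by exact_mod_cast hq1.ne')
  have hqq : qpow q (-((n:ℂ)+z)) * qpow q ((n:ℂ)+z) = 1 := by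
    rw [qpow, qpow, ← Complex.exp_add,
      show -((n:ℂ)+z) * (L:ℂ) + ((n:ℂ)+z) * (L:ℂ) = 0 by ring, Complex.exp_zero]
  have hkey : -t * qpow q (-((n:ℂ)+z)) * qbr q ((n:ℂ)+z)
      = (t - t * qpow q (-((n:ℂ)+z))) / (1 - (q:ℂ)) := by
    rw [qbr, ← mul_div_assoc]
    congr 1
    linear_combination t * hqq
  have hsplit : qpow q (-((n:ℂ)+z))
      = (Real.exp (-((n:ℝ)+z.re) * L) : ℂ) * Complex.exp (-(z.im * L) * Complex.I) := by
    rw [qpow, Complex.ofReal_exp, ← Complex.exp_add]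
    congr 1
    apply Complex.ext <;>
      · simp [Complex.mul_re, Complex.mul_im, Complex.add_re, Complex.add_im, hL]
        try ring
  rw [FpTerm, hkey, hsplit]
  simp only [qpow, norm_mul, Complex.norm_exp]
  congr 1
  · congr 1
    simp [Complex.mul_re, Complex.add_re, Complex.add_im, hL]
    try ring
  · congr 1
    rw [show (1:ℂ) - (q:ℂ) = ((1-q : ℝ) : ℂ) by push_cast; ring, Complex.div_ofReal_re]
    congr 1
    rw [Complex.sub_re, show t * ((Real.exp (-((n:ℝ)+z.re) * L) : ℂ) * Complex.exp (-(z.im * L) * Complex.I))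
      = (Real.exp (-((n:ℝ)+z.re) * L) : ℂ) * (t * Complex.exp (-(z.im * L) * Complex.I)) by ring,
      Complex.re_ofReal_mul]

lemma sumaux {q : ℝ} (hq0 : 0 < q) (hq1 : q < 1) (ν : ℕ) {c : ℝ} (hc : 0 < c) (B x : ℝ) :
    Summable (fun n : ℕ => Real.exp (-((ν:ℝ) * ((n:ℝ) + x)) * Real.log q) *
      Real.exp ((B - Real.exp (-((n:ℝ) + x) * Real.log q) * c) / (1 - q))) := by
  set L := Real.log q with hL
  have h1q : (0:ℝ) < 1 - q := by linarith
  set a : ℝ := Real.exp (-L) with ha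
  have ha0 : 0 < a := Real.exp_pos _
  have haq : a = q⁻¹ := by rw [ha, Real.exp_neg, Real.exp_log hq0]
  set A : ℝ := Real.exp (-x * L) * c / (1 - q) with hA
  have hA0 : 0 < A := by positivity
  set K : ℝ := Real.exp (-((ν:ℝ) * x) * L) * Real.exp (B / (1 - q)) * (((ν+1).factorial : ℝ) / A ^ (ν+1)) with hK
  have key : ∀ n : ℕ, Real.exp (-((ν:ℝ) * ((n:ℝ) + x)) * L) *
      Real.exp ((B - Real.exp (-((n:ℝ) + x) * L) * c) / (1 - q)) ≤ K * q ^ n := by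
    intro n
    have hpow : Real.exp (-((n:ℝ) + x) * L) = Real.exp (-x * L) * a ^ n := by
      rw [← Real.exp_nat_mul, ← Real.exp_add]; congr 1; ring
    have hpow2 : Real.exp (-((ν:ℝ) * ((n:ℝ) + x)) * L)
        = Real.exp (-((ν:ℝ) * x) * L) * a ^ (ν * n) := by
      rw [← Real.exp_nat_mul, ← Real.exp_add]; congr 1; push_cast; ring
    have hexp : Real.exp ((B - Real.exp (-((n:ℝ) + x) * L) * c) / (1 - q))
        = Real.exp (B / (1 - q)) * Real.exp (-(A * a ^ n)) := by
      rw [← Real.exp_add]; congr 1; rw [hpow, hA]; field_simp; ring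
    have hb : Real.exp (-(A * a ^ n)) ≤ ((ν+1).factorial : ℝ) / (A * a ^ n) ^ (ν+1) := by
      have hx0 : 0 < A * a ^ n := by positivity
      have h1 : (A * a ^ n) ^ (ν+1) / ((ν+1).factorial : ℝ) ≤ Real.exp (A * a ^ n) :=
        Real.pow_div_factorial_le_exp _ hx0.le _
      rw [Real.exp_neg]
      calc (Real.exp (A * a ^ n))⁻¹ ≤ ((A * a ^ n) ^ (ν+1) / ((ν+1).factorial : ℝ))⁻¹ :=
            inv_anti₀ (by positivity) h1
        _ = ((ν+1).factorial : ℝ) / (A * a ^ n) ^ (ν+1) := by rw [inv_div]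
    have heq : Real.exp (-((ν:ℝ) * x) * L) * a ^ (ν * n) *
        (Real.exp (B / (1 - q)) * (((ν+1).factorial : ℝ) / (A * a ^ n) ^ (ν+1))) = K * q ^ n := by
      have hq' : q ≠ 0 := hq0.ne'
      have hqn : (a ^ (n * (ν+1)))⁻¹ * a ^ (ν * n) = q ^ n := by
        rw [haq, show n * (ν+1) = ν * n + n by ring, pow_add]
        field_simp
        rw [one_div, inv_pow, inv_mul_cancel₀ (pow_ne_zero _ hq')]
      rw [hK, mul_pow, ← pow_mul, ← hqn]
      field_simp
    calc Real.exp (-((ν:ℝ) * ((n:ℝ) + x)) * L) *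
        Real.exp ((B - Real.exp (-((n:ℝ) + x) * L) * c) / (1 - q))
        = Real.exp (-((ν:ℝ) * x) * L) * a ^ (ν * n) *
          (Real.exp (B / (1 - q)) * Real.exp (-(A * a ^ n))) := by rw [hpow2, hexp]
      _ ≤ Real.exp (-((ν:ℝ) * x) * L) * a ^ (ν * n) *
          (Real.exp (B / (1 - q)) * (((ν+1).factorial : ℝ) / (A * a ^ n) ^ (ν+1))) := by
          apply mul_le_mul_of_nonneg_left _ (by positivity)
          exact mul_le_mul_of_nonneg_left hb (by positivity)
      _ = K * q ^ n := heq
  apply Summable.of_nonneg_of_le (fun n => by positivity) key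
  exact ((summable_geometric_of_lt_one hq0.le hq1).mul_left K)

lemma gpos {q : ℝ} (y : ℝ) {t : ℂ} (ht0 : t ≠ 0)
    (harg : |t.arg - y * Real.log q| < Real.pi / 2) :
    0 < (t * Complex.exp (-(y * Real.log q) * Complex.I)).re := by
  set L := Real.log q with hL
  have h : t * Complex.exp (-(y * L) * Complex.I)
      = ((‖t‖ : ℝ) : ℂ) * Complex.exp (((t.arg - y * L : ℝ) : ℂ) * Complex.I) := by
    conv_lhs => rw [← Complex.norm_mul_exp_arg_mul_I t]
    rw [mul_assoc, ← Complex.exp_add]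
    congr 2
    push_cast
    ring
  rw [h, Complex.re_ofReal_mul, Complex.exp_ofReal_mul_I_re]
  have habs := abs_lt.mp harg
  exact mul_pos (norm_pos_iff.mpr ht0)
    (Real.cos_pos_of_mem_Ioo ⟨by linarith [habs.1], habs.2⟩)

theorem stmt0 (q : ℝ) (hq0 : 0 < q) (hq1 : q < 1) (ν : ℕ) (hν : 0 < ν)
    (z : ℂ) (hz : |z.im| < Real.pi / (2 * |Real.log q|)) :
    (∀ t : ℂ, (t ≠ 0 ∧ |t.arg - z.im * Real.log q| < Real.pi / 2) →
      Summable (fun n : ℕ => ‖FpTerm q ν t z n‖)) ∧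
    DifferentiableOn ℂ (fun t : ℂ => Fp q ν t z)
      {t : ℂ | t ≠ 0 ∧ |t.arg - z.im * Real.log q| < Real.pi / 2} := by
  constructor
  · rintro t ⟨ht0, harg⟩
    have hg : 0 < (t * Complex.exp (-(z.im * Real.log q) * Complex.I)).re := gpos z.im ht0 harg
    exact (sumaux hq0 hq1 ν hg t.re z.re).congr fun n => (norm_FpTerm hq1 ν t z n).symm
  · rintro t₀ ⟨ht0, harg⟩
    apply DifferentiableAt.differentiableWithinAt
    have hg0 : 0 < (t₀ * Complex.exp (-(z.im * Real.log q) * Complex.I)).re := gpos z.im ht0 harg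
    set e : ℂ := Complex.exp (-(z.im * Real.log q) * Complex.I) with he
    set c₀ : ℝ := (t₀ * e).re / 2 with hc₀def
    have hc₀ : 0 < c₀ := half_pos hg0
    set V : Set ℂ := {t : ℂ | c₀ < (t * e).re} ∩ Metric.ball t₀ 1 with hV
    have hVopen : IsOpen V :=
      (isOpen_lt continuous_const
        (Complex.continuous_re.comp (continuous_id.mul continuous_const))).inter
        Metric.isOpen_ball
    have ht₀V : t₀ ∈ V := ⟨by simp only [Set.mem_setOf_eq, hc₀def]; linarith,
      Metric.mem_ball_self one_pos⟩
    have hsum : Summable (fun n : ℕ => Real.exp (-((ν:ℝ) * ((n:ℝ) + z.re)) * Real.log q) *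
        Real.exp (((‖t₀‖ + 1) - Real.exp (-((n:ℝ) + z.re) * Real.log q) * c₀) / (1 - q))) :=
      sumaux hq0 hq1 ν hc₀ _ _
    have hdiff : DifferentiableOn ℂ (fun t => ∑' n : ℕ, FpTerm q ν t z n) V := by
      apply differentiableOn_tsum_of_summable_norm hsum ?_ hVopen ?_
      · intro n
        apply Differentiable.differentiableOn
        apply Differentiable.mul (differentiable_const _)
        apply Differentiable.cexp
        exact (differentiable_id.neg.mul_const _).mul_const _
      · intro n t ht
        rw [norm_FpTerm hq1 ν t z n]
        have h1q : (0:ℝ) < 1 - q := by linarith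
        obtain ⟨ht1, ht2⟩ := ht
        have htre : t.re ≤ ‖t₀‖ + 1 := by
          have h1 := Complex.re_le_norm t
          have h2 : ‖t‖ ≤ ‖t - t₀‖ + ‖t₀‖ := by
            simpa using norm_add_le (t - t₀) t₀
          have h3 : ‖t - t₀‖ < 1 := by
            rw [← Complex.dist_eq]; exact Metric.mem_ball.mp ht2
          linarith
        have hE : (0:ℝ) < Real.exp (-((n:ℝ) + z.re) * Real.log q) := Real.exp_pos _
        have ht1' : c₀ ≤ (t * e).re := le_of_lt ht1
        apply mul_le_mul_of_nonneg_left _ (Real.exp_pos _).le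
        apply Real.exp_le_exp.mpr
        gcongr
    have hdAt : DifferentiableAt ℂ (fun t => ∑' n : ℕ, FpTerm q ν t z n) t₀ :=
      hdiff.differentiableAt (hVopen.mem_nhds ht₀V)
    have : DifferentiableAt ℂ (fun t : ℂ => Fp q ν t z) t₀ := by
      simp only [Fp]
      exact (differentiableAt_pow ν).mul hdAt
    exact this
end

section
/- Let 0 < q < 1, let ν be a positive integer, let z ∈ D_q and let t ∈ R_q(z). Then F_q^{+,ν}(q·t, z) = e^{−t}·( F_q^{+,ν}(t,z) + t^ν·q^{ν(1−z)}·e^{t·[1−z]_q} ). -/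
open Complex

lemma qpow_add' (q : ℝ) (a b : ℂ) : qpow q (a + b) = qpow q a * qpow q b := by
  simp [qpow, add_mul, Complex.exp_add]

lemma qpow_ne_zero' (q : ℝ) (w : ℂ) : qpow q w ≠ 0 := Complex.exp_ne_zero _

lemma qpow_one' (q : ℝ) (hq : 0 < q) : qpow q 1 = (q : ℂ) := by
  rw [qpow, one_mul, ← Complex.ofReal_exp, Real.exp_log hq]

lemma qpow_neg' (q : ℝ) (w : ℂ) : qpow q (-w) = (qpow q w)⁻¹ := by
  unfold qpow
  rw [← Complex.exp_neg, neg_mul]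

lemma qpow_nat' (q : ℝ) (hq : 0 < q) (n : ℕ) : qpow q (n : ℂ) = (q : ℂ) ^ n := by
  unfold qpow
  rw [Complex.exp_nat_mul, show Complex.exp ((Real.log q : ℝ) : ℂ) = (q : ℂ) by
    rw [← Complex.ofReal_exp, Real.exp_log hq]]

lemma qpow_ofReal' (q : ℝ) (x : ℝ) : qpow q (x : ℂ) = ((Real.exp (x * Real.log q) : ℝ) : ℂ) := by
  rw [qpow, Complex.ofReal_exp, Complex.ofReal_mul]

lemma one_sub_q_ne (q : ℝ) (hq1 : q < 1) : (1 : ℂ) - (q : ℂ) ≠ 0 := by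
  intro h
  have : (q : ℂ) = 1 := by linear_combination -h
  exact absurd (by exact_mod_cast this) hq1.ne

/-- key exponent identity: the recurrence relating `F(qt)` terms at `n+1` to `F(t)` terms at `n`. -/
lemma FpTerm_rec (q : ℝ) (hq0 : 0 < q) (hq1 : q < 1) (ν : ℕ) (t z : ℂ) (n : ℕ) :
    FpTerm q ν ((q : ℂ) * t) z (n + 1) =
      qpow q (-(ν : ℂ)) * Complex.exp (-t) * FpTerm q ν t z n := by
  have hq : (q : ℂ) ≠ 0 := by exact_mod_cast hq0.ne'
  have hq1' : (1 : ℂ) - (q : ℂ) ≠ 0 := one_sub_q_ne q hq1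
  have ha : qpow q ((n : ℂ) + z) ≠ 0 := qpow_ne_zero' q _
  unfold FpTerm qbr
  have hcast : ((n + 1 : ℕ) : ℂ) = (n : ℂ) + 1 := by push_cast; ring
  rw [hcast]
  have h1 : qpow q (-(ν : ℂ) * ((n : ℂ) + 1 + z)) =
      qpow q (-(ν : ℂ)) * qpow q (-(ν : ℂ) * ((n : ℂ) + z)) := by
    rw [← qpow_add']; congr 1; ring
  have h3 : qpow q ((n : ℂ) + 1 + z) = (q : ℂ) * qpow q ((n : ℂ) + z) := by
    rw [show (n : ℂ) + 1 + z = 1 + ((n : ℂ) + z) by ring, qpow_add', qpow_one' q hq0]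
  have hexp : Complex.exp (-((q : ℂ) * t) * qpow q (-((n : ℂ) + 1 + z)) *
        ((1 - qpow q ((n : ℂ) + 1 + z)) / (1 - (q : ℂ)))) =
      Complex.exp (-t) * Complex.exp (-t * qpow q (-((n : ℂ) + z)) *
        ((1 - qpow q ((n : ℂ) + z)) / (1 - (q : ℂ)))) := by
    rw [← Complex.exp_add]
    congr 1
    rw [qpow_neg', qpow_neg', h3]
    field_simp
    ring
  rw [h1, hexp]
  ring

/-- the `n = 0` term of `F(qt)`. -/
lemma FpTerm_zero (q : ℝ) (hq0 : 0 < q) (hq1 : q < 1) (ν : ℕ) (t z : ℂ) :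
    FpTerm q ν ((q : ℂ) * t) z 0 =
      qpow q (-(ν : ℂ) * z) * Complex.exp (-t) * Complex.exp (t * qbr q (1 - z)) := by
  have hq : (q : ℂ) ≠ 0 := by exact_mod_cast hq0.ne'
  have hq1' : (1 : ℂ) - (q : ℂ) ≠ 0 := one_sub_q_ne q hq1
  have ha : qpow q z ≠ 0 := qpow_ne_zero' q _
  unfold FpTerm qbr
  simp only [Nat.cast_zero, zero_add]
  have h1 : qpow q (1 - z) = (q : ℂ) * (qpow q z)⁻¹ := by
    rw [sub_eq_add_neg, qpow_add', qpow_one' q hq0, qpow_neg']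
  have hexp : Complex.exp (-((q : ℂ) * t) * qpow q (-z) * ((1 - qpow q z) / (1 - (q : ℂ)))) =
      Complex.exp (-t) * Complex.exp (t * ((1 - qpow q (1 - z)) / (1 - (q : ℂ)))) := by
    rw [← Complex.exp_add]
    congr 1
    rw [h1, qpow_neg']
    field_simp
    ring
  rw [hexp]
  ring

/-- self-recurrence used to compute the ratio of norms. -/
lemma FpTerm_selfrec (q : ℝ) (hq0 : 0 < q) (hq1 : q < 1) (ν : ℕ) (t z : ℂ) (n : ℕ) :
    FpTerm q ν t z (n + 1) =
      qpow q (-(ν : ℂ)) *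
        Complex.exp (-(qpow q (-((n : ℂ) + 1))) * (t * qpow q (-z))) * FpTerm q ν t z n := by
  have hq : (q : ℂ) ≠ 0 := by exact_mod_cast hq0.ne'
  have hq1' : (1 : ℂ) - (q : ℂ) ≠ 0 := one_sub_q_ne q hq1
  have ha : qpow q ((n : ℂ) + z) ≠ 0 := qpow_ne_zero' q _
  have haz : qpow q z ≠ 0 := qpow_ne_zero' q _
  have han : qpow q ((n : ℂ) + 1) ≠ 0 := qpow_ne_zero' q _
  unfold FpTerm qbr
  have hcast : ((n + 1 : ℕ) : ℂ) = (n : ℂ) + 1 := by push_cast; ring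
  rw [hcast]
  have h1 : qpow q (-(ν : ℂ) * ((n : ℂ) + 1 + z)) =
      qpow q (-(ν : ℂ)) * qpow q (-(ν : ℂ) * ((n : ℂ) + z)) := by
    rw [← qpow_add']; congr 1; ring
  have h3 : qpow q ((n : ℂ) + 1 + z) = qpow q ((n : ℂ) + 1) * qpow q z := by
    rw [← qpow_add']
  have h4 : qpow q ((n : ℂ) + z) * (q : ℂ) = qpow q ((n : ℂ) + 1) * qpow q z := by
    rw [← qpow_one' q hq0, ← qpow_add', ← qpow_add']
    congr 1
    ring
  have h4' : qpow q ((n : ℂ) + z) = qpow q ((n : ℂ) + 1) * qpow q z * (q : ℂ)⁻¹ := by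
    field_simp
    linear_combination h4
  have hexp : Complex.exp (-t * qpow q (-((n : ℂ) + 1 + z)) *
        ((1 - qpow q ((n : ℂ) + 1 + z)) / (1 - (q : ℂ)))) =
      Complex.exp (-(qpow q (-((n : ℂ) + 1))) * (t * qpow q (-z))) *
        Complex.exp (-t * qpow q (-((n : ℂ) + z)) *
          ((1 - qpow q ((n : ℂ) + z)) / (1 - (q : ℂ)))) := by
    rw [← Complex.exp_add]
    congr 1
    rw [qpow_neg', qpow_neg', qpow_neg', qpow_neg', h3, h4']
    field_simp
    ring
  rw [h1, hexp]
  ring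

lemma FpTerm_summable (q : ℝ) (hq0 : 0 < q) (hq1 : q < 1) (ν : ℕ) (t z : ℂ)
    (hδ : 0 < (t * qpow q (-z)).re) : Summable (FpTerm q ν t z) := by
  set L := Real.log q with hL
  have hLneg : L < 0 := Real.log_neg hq0 hq1
  set δ := (t * qpow q (-z)).re with hδdef
  apply summable_of_ratio_norm_eventually_le (r := 1 / 2) (by norm_num)
  have key : ∀ n : ℕ, ‖FpTerm q ν t z (n + 1)‖ =
      (Real.exp (-(ν : ℝ) * L) * Real.exp (-(Real.exp (-((n : ℝ) + 1) * L)) * δ)) *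
        ‖FpTerm q ν t z n‖ := by
    intro n
    rw [FpTerm_selfrec q hq0 hq1 ν t z n]
    rw [norm_mul, norm_mul]
    congr 2
    · rw [show ‖qpow q (-(ν : ℂ))‖ = ‖qpow q (-(ν : ℂ))‖ from rfl,
        qpow, Complex.norm_exp]
      congr 1
      simp [← hL]
    · rw [show qpow q (-((n : ℂ) + 1)) = ((Real.exp (-((n : ℝ) + 1) * L) : ℝ) : ℂ) by
        rw [show -((n : ℂ) + 1) = ((-((n : ℝ) + 1) : ℝ) : ℂ) by push_cast; ring,
          qpow_ofReal', hL]]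
      rw [show ‖Complex.exp (-((Real.exp (-((n : ℝ) + 1) * L) : ℝ) : ℂ) * (t * qpow q (-z)))‖
          = ‖(Complex.exp (-((Real.exp (-((n : ℝ) + 1) * L) : ℝ) : ℂ) *
            (t * qpow q (-z))))‖ from rfl, Complex.norm_exp]
      congr 1
      rw [show -((Real.exp (-((n : ℝ) + 1) * L) : ℝ) : ℂ) * (t * qpow q (-z))
          = ((-(Real.exp (-((n : ℝ) + 1) * L)) : ℝ) : ℂ) * (t * qpow q (-z)) by push_cast; ring]
      rw [Complex.re_ofReal_mul]
  have tend : Filter.Tendsto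
      (fun n : ℕ => Real.exp (-(ν : ℝ) * L) * Real.exp (-(Real.exp (-((n : ℝ) + 1) * L)) * δ))
      Filter.atTop (nhds 0) := by
    have h0 : Filter.Tendsto (fun n : ℕ => (n : ℝ) + 1) Filter.atTop Filter.atTop :=
      Filter.tendsto_atTop_add_const_right _ 1 tendsto_natCast_atTop_atTop
    have h1 : Filter.Tendsto (fun n : ℕ => -((n : ℝ) + 1) * L) Filter.atTop Filter.atTop :=
      Filter.Tendsto.congr (fun n => by ring) (h0.atTop_mul_const (neg_pos.mpr hLneg))
    have h2 : Filter.Tendsto (fun n : ℕ => Real.exp (-((n : ℝ) + 1) * L))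
        Filter.atTop Filter.atTop := Real.tendsto_exp_atTop.comp h1
    have h3 : Filter.Tendsto (fun n : ℕ => -(Real.exp (-((n : ℝ) + 1) * L)) * δ)
        Filter.atTop Filter.atBot :=
      Filter.Tendsto.congr (fun n => by simp only [Function.comp_apply]; ring)
        (Filter.tendsto_neg_atTop_atBot.comp (h2.atTop_mul_const hδ))
    have h4 : Filter.Tendsto (fun n : ℕ => Real.exp (-(Real.exp (-((n : ℝ) + 1) * L)) * δ))
        Filter.atTop (nhds 0) := Real.tendsto_exp_atBot.comp h3
    have := h4.const_mul (Real.exp (-(ν : ℝ) * L))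
    simpa using this
  filter_upwards [tend.eventually_lt_const (by norm_num : (0 : ℝ) < 1 / 2)] with n hn
  rw [key n]
  exact mul_le_mul_of_nonneg_right hn.le (norm_nonneg _)

theorem stmt2 (q : ℝ) (hq0 : 0 < q) (hq1 : q < 1) (ν : ℕ) (hν : 0 < ν)
    (z : ℂ) (hz : |z.im| < Real.pi / (2 * |Real.log q|))
    (t : ℂ) (ht : t ≠ 0 ∧ |t.arg - z.im * Real.log q| < Real.pi / 2) :
    Fp q ν ((q : ℂ) * t) z =
      Complex.exp (-t) *
        (Fp q ν t z + t ^ ν * qpow q ((ν : ℂ) * (1 - z)) * Complex.exp (t * qbr q (1 - z))) := by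
  obtain ⟨ht0, harg⟩ := ht
  set L := Real.log q with hLdef
  -- positivity of Re(t · q^{-z})
  have hδ : 0 < (t * qpow q (-z)).re := by
    have hld : -z * (L : ℂ) = ((-z.re * L : ℝ) : ℂ) + ((-z.im * L : ℝ) : ℂ) * I := by
      apply Complex.ext <;> simp [Complex.mul_re, Complex.mul_im] <;> ring
    have hw : t * qpow q (-z) =
        ((‖t‖ * Real.exp (-z.re * L) : ℝ) : ℂ) *
          Complex.exp (((t.arg + -z.im * L : ℝ) : ℂ) * I) := by
      conv_lhs => rw [← Complex.norm_mul_exp_arg_mul_I t]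
      rw [qpow, ← hLdef, hld, Complex.exp_add, ← Complex.ofReal_exp]
      push_cast
      rw [add_mul, Complex.exp_add]
      ring
    rw [hw, Complex.re_ofReal_mul, Complex.exp_ofReal_mul_I_re]
    have habs : 0 < ‖t‖ := norm_pos_iff.mpr ht0
    have hcos : 0 < Real.cos (t.arg + -z.im * L) := by
      apply Real.cos_pos_of_mem_Ioo
      have := abs_lt.mp harg
      constructor <;> [linarith [this.1]; linarith [this.2]]
    positivity
  have hδ' : 0 < (((q : ℂ) * t) * qpow q (-z)).re := by
    rw [show ((q : ℂ) * t) * qpow q (-z) = (q : ℝ) * (t * qpow q (-z)) by push_cast; ring,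
      Complex.re_ofReal_mul]
    exact mul_pos hq0 hδ
  have hsum : Summable (FpTerm q ν ((q : ℂ) * t) z) := FpTerm_summable q hq0 hq1 ν _ z hδ'
  unfold Fp
  rw [Summable.tsum_eq_zero_add hsum, FpTerm_zero q hq0 hq1 ν t z]
  have hrec : ∀ n : ℕ, FpTerm q ν ((q : ℂ) * t) z (n + 1) =
      (qpow q (-(ν : ℂ)) * Complex.exp (-t)) * FpTerm q ν t z n := fun n =>
    FpTerm_rec q hq0 hq1 ν t z n
  rw [tsum_congr hrec, tsum_mul_left]
  have hqn : ((q : ℂ) * t) ^ ν = qpow q (ν : ℂ) * t ^ ν := by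
    rw [mul_pow, qpow_nat' q hq0]
  have e1 : qpow q (ν : ℂ) * qpow q (-(ν : ℂ)) = 1 := by
    rw [← qpow_add']
    simp [qpow]
  have e2 : qpow q (ν : ℂ) * qpow q (-(ν : ℂ) * z) = qpow q ((ν : ℂ) * (1 - z)) := by
    rw [← qpow_add']
    congr 1
    ring
  rw [hqn]
  set S := ∑' n : ℕ, FpTerm q ν t z n
  linear_combination (t ^ ν * Complex.exp (-t) * Complex.exp (t * qbr q (1 - z))) * e2 +
    (t ^ ν * Complex.exp (-t) * S) * e1
end

section
/- Let 0 < q < 1, let ν be a positive integer, let z ∈ J_q and let s ∈ ℂ with Re(s) > ν + 1. Then Γ(s)·ζ_q^{(ν)}(s,z) = ∫_0^∞ t^{s−ν−1}·F_q^{+,ν}(t,z) dt, where the integral is over real t ∈ (0,∞) and t^{s−ν−1} := exp((s−ν−1)·log t). -/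
open Complex MeasureTheory
open Set Filter Topology


lemma integrableOn_rpow_exp {σ b : ℝ} (hσ : 0 < σ) (hb : 0 < b) :
    IntegrableOn (fun t : ℝ => t ^ (σ - 1) * Real.exp (-(b * t))) (Ioi 0) := by
  have h := Real.GammaIntegral_convergent hσ
  rw [← mul_zero b, ← integrableOn_Ioi_comp_mul_left_iff _ _ hb] at h
  refine MeasureTheory.IntegrableOn.congr_fun (h.const_mul (b ^ (1 - σ))) (fun t ht => ?_)
    measurableSet_Ioi
  have ht' : (0:ℝ) < t := ht
  rw [Real.mul_rpow hb.le ht'.le,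
    show b ^ (1-σ) * (Real.exp (-(b*t)) * (b ^ (σ-1) * t ^ (σ-1)))
      = (b ^ (1-σ) * b ^ (σ-1)) * (t ^ (σ-1) * Real.exp (-(b*t))) by ring,
    ← Real.rpow_add hb, show (1-σ)+(σ-1) = 0 by ring, Real.rpow_zero, one_mul]

lemma aesm_cpow_exp (s a : ℂ) :
    AEStronglyMeasurable (fun t : ℝ => (t:ℂ) ^ (s - 1) * Complex.exp (-(a * t)))
      (volume.restrict (Ioi 0)) := by
  refine ContinuousOn.aestronglyMeasurable (fun t ht => ?_) measurableSet_Ioi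
  exact ((continuousAt_ofReal_cpow_const t (s-1) (Or.inr (ne_of_gt ht))).mul
    (((continuous_const.mul Complex.continuous_ofReal).neg.cexp).continuousAt)).continuousWithinAt

lemma norm_cpow_exp {t : ℝ} (ht : 0 < t) (s a : ℂ) :
    ‖(t:ℂ) ^ (s - 1) * Complex.exp (-(a * t))‖ = t ^ (s.re - 1) * Real.exp (-(a.re * t)) := by
  rw [norm_mul,
    Complex.norm_cpow_eq_rpow_re_of_pos ht, Complex.norm_exp]
  simp [Complex.mul_re]

lemma integrableOn_cpow_exp {s : ℂ} (hs : 0 < s.re) {a : ℂ} (ha : 0 < a.re) :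
    IntegrableOn (fun t : ℝ => (t:ℂ) ^ (s - 1) * Complex.exp (-(a * t))) (Ioi 0) := by
  refine Integrable.mono' (integrableOn_rpow_exp hs ha) (aesm_cpow_exp s a) ?_
  rw [ae_restrict_iff' measurableSet_Ioi]
  exact Filter.Eventually.of_forall fun t ht => le_of_eq (norm_cpow_exp ht s a)
lemma integral_cpow_exp {s : ℂ} (hs : 0 < s.re) {a : ℂ} (ha : 0 < a.re) :
    ∫ t : ℝ in Ioi 0, (t:ℂ) ^ (s - 1) * Complex.exp (-(a * t)) = Complex.Gamma s * a ^ (-s) := by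
  set U : Set ℂ := {w : ℂ | 0 < w.re} with hUdef
  have hUo : IsOpen U := isOpen_lt continuous_const Complex.continuous_re
  have key : ∀ w ∈ U, HasDerivAt
      (fun w : ℂ => ∫ t : ℝ in Ioi 0, (t:ℂ) ^ (s - 1) * Complex.exp (-(w * t)))
      (∫ t : ℝ in Ioi 0, (t:ℂ) ^ (s - 1) * (Complex.exp (-(w * t)) * (-(t:ℂ)))) w := by
    intro w hw
    have hw0 : 0 < w.re := hw
    have hε : 0 < w.re / 2 := half_pos hw0
    refine (hasDerivAt_integral_of_dominated_loc_of_deriv_le (μ := volume.restrict (Ioi 0))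
      (F := fun w (t:ℝ) => (t:ℂ) ^ (s - 1) * Complex.exp (-(w * t)))
      (F' := fun w (t:ℝ) => (t:ℂ) ^ (s - 1) * (Complex.exp (-(w * t)) * (-(t:ℂ))))
      (bound := fun t : ℝ => t ^ (s.re + 1 - 1) * Real.exp (-(w.re/2 * t)))
      (Metric.ball_mem_nhds w hε) (Filter.Eventually.of_forall fun x => aesm_cpow_exp s x)
      (integrableOn_cpow_exp hs hw0) ?_ ?_ ?_ ?_).2
    · refine ContinuousOn.aestronglyMeasurable (fun t ht => ?_) measurableSet_Ioi
      exact ((continuousAt_ofReal_cpow_const t (s-1) (Or.inr (ne_of_gt ht))).mul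
        ((((continuous_const.mul Complex.continuous_ofReal).neg.cexp).mul
          Complex.continuous_ofReal.neg).continuousAt)).continuousWithinAt
    · rw [ae_restrict_iff' measurableSet_Ioi]
      refine Filter.Eventually.of_forall fun t ht => fun x hx => ?_
      have ht' : (0:ℝ) < t := ht
      have hxre : w.re/2 ≤ x.re := by
        have h1 : |(x - w).re| ≤ ‖x - w‖ := Complex.abs_re_le_norm _
        rw [Metric.mem_ball, Complex.dist_eq] at hx
        have h2 := abs_lt.mp (lt_of_le_of_lt h1 hx)
        simp only [Complex.sub_re] at h2
        linarith [h2.1]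
      have hnorm : ‖(t:ℂ) ^ (s - 1) * (Complex.exp (-(x * t)) * (-(t:ℂ)))‖
          = t ^ (s.re - 1) * (Real.exp (-(x.re * t)) * t) := by
        rw [norm_mul, norm_mul,
          Complex.norm_cpow_eq_rpow_re_of_pos ht', Complex.norm_exp, norm_neg,
          Complex.norm_real, Real.norm_eq_abs, abs_of_pos ht']
        simp [Complex.mul_re]
      rw [hnorm]
      calc t ^ (s.re - 1) * (Real.exp (-(x.re * t)) * t)
          = t ^ (s.re + 1 - 1) * Real.exp (-(x.re * t)) := by
            rw [show s.re + 1 - 1 = (s.re - 1) + 1 by ring,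
              Real.rpow_add_one (ne_of_gt ht')]; ring
        _ ≤ t ^ (s.re + 1 - 1) * Real.exp (-(w.re/2 * t)) := by
            refine mul_le_mul_of_nonneg_left ?_ (Real.rpow_nonneg ht'.le _)
            apply Real.exp_le_exp.mpr
            nlinarith
    · exact integrableOn_rpow_exp (by linarith) hε
    · rw [ae_restrict_iff' measurableSet_Ioi]
      refine Filter.Eventually.of_forall fun t _ => fun x _ => ?_
      have h1 : HasDerivAt (fun x : ℂ => -(x * (t:ℂ))) (-(t:ℂ)) x := by
        simpa using ((hasDerivAt_id x).mul_const (t:ℂ)).fun_neg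
      exact h1.cexp.const_mul _
  have hf : AnalyticOnNhd ℂ
      (fun w : ℂ => ∫ t : ℝ in Ioi 0, (t:ℂ) ^ (s - 1) * Complex.exp (-(w * t))) U :=
    DifferentiableOn.analyticOnNhd
      (fun w hw => ((key w hw).differentiableAt).differentiableWithinAt) hUo
  have hg : AnalyticOnNhd ℂ (fun w : ℂ => Complex.Gamma s * w ^ (-s)) U := by
    refine DifferentiableOn.analyticOnNhd
      (fun w hw => DifferentiableAt.differentiableWithinAt ?_) hUo
    exact (differentiableAt_id.cpow (differentiableAt_const _) (Or.inl hw)).const_mul _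
  have h1U : (1:ℂ) ∈ U := by simp [hUdef]
  have hfreq : ∃ᶠ w in 𝓝[≠] (1:ℂ),
      (∫ t : ℝ in Ioi 0, (t:ℂ) ^ (s - 1) * Complex.exp (-(w * t)))
        = Complex.Gamma s * w ^ (-s) := by
    have htend : Filter.Tendsto (fun n : ℕ => ((1 + 1/((n:ℝ)+1) : ℝ) : ℂ))
        Filter.atTop (𝓝[≠] (1:ℂ)) := by
      rw [tendsto_nhdsWithin_iff]
      constructor
      · have h0 : Filter.Tendsto (fun n : ℕ => (1 + 1/((n:ℝ)+1) : ℝ)) Filter.atTop (𝓝 1) := by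
          simpa using (tendsto_const_nhds (x := (1:ℝ))).add tendsto_one_div_add_atTop_nhds_zero_nat
        have := (Complex.continuous_ofReal.tendsto 1).comp h0
        simpa [Function.comp_def] using this
      · refine Filter.Eventually.of_forall fun n => ?_
        simp only [Set.mem_compl_iff, Set.mem_singleton_iff]
        intro h
        have h' : (1 + 1/((n:ℝ)+1) : ℝ) = 1 := by exact_mod_cast h
        have h2 : 0 < 1/((n:ℝ)+1) := by positivity
        linarith
    refine htend.frequently (Filter.Frequently.of_forall fun n => ?_)
    have hr : 0 < (1 + 1/((n:ℝ)+1) : ℝ) := by positivity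
    have h1 := Complex.integral_cpow_mul_exp_neg_mul_Ioi hs hr
    rw [h1, one_div, Complex.inv_cpow _ _
      (by rw [Complex.arg_ofReal_of_nonneg hr.le]; exact Real.pi_ne_zero.symm),
      ← Complex.cpow_neg, mul_comm]
  have heq := hf.eqOn_of_preconnected_of_frequently_eq hg
    ((convex_halfSpace_re_gt 0).isPreconnected) h1U hfreq
  exact heq ha

/-- `ζ_q^{(ν)}(s,z) := Σ_{n≥0} q^{(n+z)(s−ν)} · [n+z]_q^{−s}`, where
`[n+z]_q^{−s} := exp(−s · Log [n+z]_q)` with the principal logarithm. -/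
noncomputable def zetaQ (q : ℝ) (ν : ℕ) (s z : ℂ) : ℂ :=
  ∑' n : ℕ, qpow q (((n : ℂ) + z) * (s - (ν : ℂ))) *
    Complex.exp (-s * Complex.log (qbr q ((n : ℂ) + z)))

theorem stmt6 (q : ℝ) (hq0 : 0 < q) (hq1 : q < 1) (ν : ℕ) (hν : 0 < ν)
    (z : ℂ) (hz : |z.im| < Real.pi / (2 * |Real.log q|))
    (hz' : 0 < z.re ∧ 1 < q ^ (-z.re) * Real.cos (z.im * Real.log q))
    (s : ℂ) (hs : (ν : ℝ) + 1 < s.re) :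
    Complex.Gamma s * zetaQ q ν s z =
      ∫ t in Set.Ioi (0 : ℝ),
        Complex.exp ((s - (ν : ℂ) - 1) * Real.log t) * Fp q ν (t : ℂ) z := by
  obtain ⟨hx, hK⟩ := hz'
  have hL : Real.log q < 0 := Real.log_neg hq0 hq1
  have hLne : Real.log q ≠ 0 := ne_of_lt hL
  have h1q : (0:ℝ) < 1 - q := by linarith
  have hν1 : (1:ℝ) ≤ (ν:ℝ) := by exact_mod_cast hν
  have hσ : 0 < s.re := by linarith
  have hσν : 0 < s.re - (ν:ℝ) := by linarith
  have hqx : (0:ℝ) < q ^ (-z.re) := Real.rpow_pos_of_pos hq0 _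
  have hqxx : q ^ z.re * q ^ (-z.re) = 1 := by
    rw [← Real.rpow_add hq0]; simp
  have hc_gt : q ^ z.re < Real.cos (z.im * Real.log q) := by
    nlinarith [Real.rpow_pos_of_pos hq0 z.re]
  have hc0 : 0 < Real.cos (z.im * Real.log q) :=
    lt_trans (Real.rpow_pos_of_pos hq0 z.re) hc_gt
  have hc1 : Real.cos (z.im * Real.log q) ≤ 1 := Real.cos_le_one _
  -- basic facts about qpow
  have hqpow_mul : ∀ u v : ℂ, qpow q u * qpow q v = qpow q (u+v) := by
    intro u v; rw [qpow, qpow, qpow, ← Complex.exp_add]; ring_nf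
  have hqpow_zero : qpow q 0 = 1 := by rw [qpow]; simp
  have hmulre : ∀ u : ℂ, (u * (Real.log q : ℂ)).re = Real.log q * u.re := by
    intro u
    rw [Complex.mul_re, Complex.ofReal_re, Complex.ofReal_im, mul_zero, sub_zero, mul_comm]
  have hqpow_re : ∀ u : ℂ, (qpow q u).re = q ^ u.re * Real.cos (u.im * Real.log q) := by
    intro u
    rw [qpow, Complex.exp_re, Real.rpow_def_of_pos hq0, hmulre]
    congr 2
    rw [Complex.mul_im, Complex.ofReal_re, Complex.ofReal_im, mul_zero, zero_add]
  have hqpow_norm : ∀ u : ℂ, ‖qpow q u‖ = q ^ u.re := by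
    intro u
    rw [qpow, Complex.norm_exp, Real.rpow_def_of_pos hq0, hmulre]
  have hre_div : ∀ v : ℂ, (v / (1 - (q:ℂ))).re = v.re / (1 - q) := by
    intro v
    rw [show (1 - (q:ℂ)) = ((1 - q : ℝ) : ℂ) by push_cast; ring, Complex.div_ofReal_re]
  -- real part of qbr is positive
  have hqbr_re : ∀ n : ℕ, 0 < (qbr q ((n:ℂ) + z)).re := by
    intro n
    rw [qbr, hre_div, Complex.sub_re, Complex.one_re, hqpow_re]
    apply div_pos _ h1q
    have h1 : ((n:ℂ)+z).re = (n:ℝ) + z.re := by simp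
    have h2 : ((n:ℂ)+z).im = z.im := by simp
    have hn0 : (0:ℝ) ≤ (n:ℝ) := Nat.cast_nonneg n
    rw [h1, h2]
    have h3 : q ^ ((n:ℝ) + z.re) < 1 := Real.rpow_lt_one hq0.le hq1 (by linarith)
    nlinarith [Real.rpow_pos_of_pos hq0 ((n:ℝ) + z.re)]
  have hqbr_ne : ∀ n : ℕ, qbr q ((n:ℂ) + z) ≠ 0 := by
    intro n h
    simpa [h] using hqbr_re n
  -- the coefficient A n
  set A : ℕ → ℂ := fun n => qpow q (-((n:ℂ) + z)) * qbr q ((n:ℂ) + z) with hA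
  have hA_eq : ∀ n : ℕ, A n = (qpow q (-((n:ℂ)+z)) - 1) / (1 - (q:ℂ)) := by
    intro n
    rw [hA]
    simp only
    rw [qbr, mul_div_assoc']
    congr 1
    rw [mul_sub, mul_one, hqpow_mul, show -((n:ℂ)+z) + ((n:ℂ)+z) = 0 by ring, hqpow_zero]
  have hA_re : ∀ n : ℕ, (A n).re
      = (q ^ (-((n:ℝ) + z.re)) * Real.cos (z.im * Real.log q) - 1) / (1 - q) := by
    intro n
    rw [hA_eq n, hre_div, Complex.sub_re, Complex.one_re, hqpow_re]
    have h1 : (-((n:ℂ) + z)).re = -((n:ℝ) + z.re) := by simp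
    have h2 : (-((n:ℂ) + z)).im = -z.im := by simp
    rw [h1, h2, show -z.im * Real.log q = -(z.im * Real.log q) by ring, Real.cos_neg]
  have hmono : ∀ n : ℕ, q ^ (-z.re) ≤ q ^ (-((n:ℝ)+z.re)) := by
    intro n
    apply Real.rpow_le_rpow_of_exponent_ge hq0 hq1.le
    have : (0:ℝ) ≤ (n:ℝ) := Nat.cast_nonneg n
    linarith
  have hA_pos : ∀ n : ℕ, 0 < (A n).re := by
    intro n
    rw [hA_re n]
    apply div_pos _ h1q
    nlinarith [hmono n]
  have hAne : ∀ n : ℕ, A n ≠ 0 := by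
    intro n h
    simpa [h] using hA_pos n
  -- quantitative lower bound
  have hone_le : ∀ n : ℕ, (1:ℝ) ≤ q ^ (-(n:ℝ)) := by
    intro n
    have h0 : q ^ (0:ℝ) ≤ q ^ (-(n:ℝ)) := by
      apply Real.rpow_le_rpow_of_exponent_ge hq0 hq1.le
      have : (0:ℝ) ≤ (n:ℝ) := Nat.cast_nonneg n
      linarith
    simpa using h0
  have hsplit : ∀ n : ℕ, q ^ (-((n:ℝ)+z.re)) = q ^ (-(n:ℝ)) * q ^ (-z.re) := by
    intro n
    rw [← Real.rpow_add hq0]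
    congr 1; ring
  have hbnd : ∀ n : ℕ, q ^ (-(n:ℝ))
        * ((q ^ (-z.re) * Real.cos (z.im * Real.log q) - 1) / (1 - q)) ≤ (A n).re := by
    intro n
    rw [hA_re n, mul_div_assoc']
    have hnum : q ^ (-(n:ℝ)) * (q ^ (-z.re) * Real.cos (z.im * Real.log q) - 1)
        ≤ q ^ (-((n:ℝ) + z.re)) * Real.cos (z.im * Real.log q) - 1 := by
      rw [hsplit n]
      nlinarith [hone_le n]
    exact (div_le_div_iff_of_pos_right h1q).mpr hnum
  -- the logarithm of A n
  have hyL : |z.im * Real.log q| < Real.pi / 2 := by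
    have h2 : 0 < |Real.log q| := abs_pos.mpr hLne
    rw [abs_mul]
    calc |z.im| * |Real.log q| < (Real.pi / (2 * |Real.log q|)) * |Real.log q| :=
          mul_lt_mul_of_pos_right hz h2
      _ = Real.pi / 2 := by field_simp
  have harg : ∀ n : ℕ, |Complex.arg (qbr q ((n:ℂ)+z))| < Real.pi / 2 :=
    fun n => Complex.abs_arg_lt_pi_div_two_iff.mpr (Or.inl (hqbr_re n))
  have him : ∀ n : ℕ, (-((n:ℂ)+z) * (Real.log q : ℂ)).im = -(z.im * Real.log q) := by
    intro n
    rw [Complex.mul_im, Complex.ofReal_re, Complex.ofReal_im, mul_zero, zero_add]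
    have h5 : (-((n:ℂ)+z)).im = -z.im := by simp
    rw [h5]; ring
  have hlogA : ∀ n : ℕ, Complex.log (A n)
      = -((n:ℂ)+z) * (Real.log q : ℂ) + Complex.log (qbr q ((n:ℂ)+z)) := by
    intro n
    have hexp : A n = Complex.exp (-((n:ℂ)+z) * (Real.log q:ℂ)
        + Complex.log (qbr q ((n:ℂ)+z))) := by
      show qpow q (-((n:ℂ)+z)) * qbr q ((n:ℂ)+z) = _
      rw [Complex.exp_add, Complex.exp_log (hqbr_ne n), qpow]
    have him2 : (-((n:ℂ)+z) * (Real.log q : ℂ) + Complex.log (qbr q ((n:ℂ)+z))).im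
        = -(z.im * Real.log q) + Complex.arg (qbr q ((n:ℂ)+z)) := by
      rw [Complex.add_im, him n, Complex.log_im]
    have hb1 := abs_lt.mp hyL
    have hb2 := abs_lt.mp (harg n)
    have hpi := Real.pi_pos
    rw [hexp, Complex.log_exp]
    · rw [him2]; linarith
    · rw [him2]; linarith
  -- per-term integral
  have hterm : ∀ n : ℕ,
      (∫ t : ℝ in Set.Ioi 0, (t:ℂ) ^ (s - 1) * Complex.exp (-(A n * t)))
        = Complex.Gamma s * ((A n) ^ (-s)) :=
    fun n => integral_cpow_exp hσ (hA_pos n)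
  have hterm2 : ∀ n : ℕ, qpow q (-(ν:ℂ) * ((n:ℂ)+z)) * (Complex.Gamma s * (A n) ^ (-s))
      = Complex.Gamma s * (qpow q (((n:ℂ)+z) * (s - (ν:ℂ)))
          * Complex.exp (-s * Complex.log (qbr q ((n:ℂ)+z)))) := by
    intro n
    calc qpow q (-(ν:ℂ) * ((n:ℂ)+z)) * (Complex.Gamma s * (A n) ^ (-s))
        = Complex.Gamma s * (Complex.exp ((-(ν:ℂ) * ((n:ℂ)+z)) * (Real.log q:ℂ))
            * Complex.exp (Complex.log (A n) * (-s))) := by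
          rw [Complex.cpow_def_of_ne_zero (hAne n), qpow]; ring
      _ = Complex.Gamma s * Complex.exp ((-(ν:ℂ) * ((n:ℂ)+z)) * (Real.log q:ℂ)
            + Complex.log (A n) * (-s)) := by rw [Complex.exp_add]
      _ = Complex.Gamma s * Complex.exp ((((n:ℂ)+z) * (s - (ν:ℂ))) * (Real.log q:ℂ)
            + (-s * Complex.log (qbr q ((n:ℂ)+z)))) := by
          rw [hlogA n]
          exact congrArg _ (congrArg _ (by ring))
      _ = Complex.Gamma s * (qpow q (((n:ℂ)+z) * (s - (ν:ℂ)))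
            * Complex.exp (-s * Complex.log (qbr q ((n:ℂ)+z)))) := by
          rw [qpow, Complex.exp_add]
  -- the summand functions
  set H : ℕ → ℝ → ℂ := fun n t => (t:ℂ) ^ (s - 1) * FpTerm q ν (t:ℂ) z n with hH
  have hHeq : ∀ n (t:ℝ), H n t
      = qpow q (-(ν:ℂ) * ((n:ℂ)+z)) * ((t:ℂ) ^ (s-1) * Complex.exp (-(A n * t))) := by
    intro n t
    rw [hH]
    simp only [FpTerm, hA]
    rw [show (-(t:ℂ)) * qpow q (-((n:ℂ)+z)) * qbr q ((n:ℂ)+z)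
        = -((qpow q (-((n:ℂ)+z)) * qbr q ((n:ℂ)+z)) * (t:ℂ)) by ring]
    ring
  have hHint : ∀ n, Integrable (H n) (volume.restrict (Set.Ioi 0)) := by
    intro n
    have h1 := (integrableOn_cpow_exp hσ (hA_pos n)).const_mul (qpow q (-(ν:ℂ) * ((n:ℂ)+z)))
    have heq2 : (fun t : ℝ => qpow q (-(ν:ℂ) * ((n:ℂ)+z))
        * ((t:ℂ) ^ (s-1) * Complex.exp (-(A n * t)))) = H n := by
      funext t; rw [hHeq n t]
    rw [← heq2]
    exact h1
  have hHval : ∀ n, (∫ t : ℝ in Set.Ioi 0, H n t)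
      = Complex.Gamma s * (qpow q (((n:ℂ)+z) * (s - (ν:ℂ)))
          * Complex.exp (-s * Complex.log (qbr q ((n:ℂ)+z)))) := by
    intro n
    simp_rw [hHeq n]
    rw [integral_const_mul, hterm n, hterm2 n]
  -- norms
  have hre_nu : ∀ n : ℕ, (-(ν:ℂ) * ((n:ℂ)+z)).re = -(ν:ℝ) * ((n:ℝ) + z.re) := by
    intro n
    simp only [Complex.mul_re, Complex.neg_re, Complex.neg_im, Complex.natCast_re,
      Complex.natCast_im, Complex.add_re, Complex.add_im]
    ring
  have hHnorm : ∀ n : ℕ, ∀ t ∈ Set.Ioi (0:ℝ), ‖H n t‖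
      = q ^ (-(ν:ℝ) * ((n:ℝ) + z.re)) * (t ^ (s.re - 1) * Real.exp (-((A n).re * t))) := by
    intro n t ht
    rw [hHeq n t, norm_mul, hqpow_norm, norm_cpow_exp ht, hre_nu n]
  have hnormval : ∀ n, (∫ t : ℝ in Set.Ioi 0, ‖H n t‖)
      = q ^ (-(ν:ℝ) * ((n:ℝ) + z.re)) * ((1 / (A n).re) ^ s.re * Real.Gamma s.re) := by
    intro n
    rw [MeasureTheory.setIntegral_congr_fun measurableSet_Ioi (hHnorm n),
      MeasureTheory.integral_const_mul, Real.integral_rpow_mul_exp_neg_mul_Ioi hσ (hA_pos n)]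
  -- summability of the integrals of norms
  have hδ : 0 < (q ^ (-z.re) * Real.cos (z.im * Real.log q) - 1) / (1 - q) :=
    div_pos (by nlinarith) h1q
  have hsummable : Summable (fun n => ∫ t : ℝ in Set.Ioi 0, ‖H n t‖) := by
    set δ : ℝ := (q ^ (-z.re) * Real.cos (z.im * Real.log q) - 1) / (1 - q) with hδdef
    set M : ℝ := q ^ (-(ν:ℝ) * z.re) * ((1/δ) ^ s.re * Real.Gamma s.re) with hM
    have hgeo : Summable (fun n : ℕ => M * (q ^ (s.re - (ν:ℝ)))^n) := by
      apply Summable.mul_left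
      apply summable_geometric_of_lt_one (Real.rpow_nonneg hq0.le _)
      exact Real.rpow_lt_one hq0.le hq1 hσν
    refine Summable.of_nonneg_of_le
      (fun n => MeasureTheory.integral_nonneg fun t => norm_nonneg _) (fun n => ?_) hgeo
    rw [hnormval n]
    have hb := hbnd n
    have hbpos := hA_pos n
    have hqn := Real.rpow_pos_of_pos hq0 (-(n:ℝ))
    have hqnp := Real.rpow_pos_of_pos hq0 ((n:ℝ))
    have h3 : (q ^ (-(n:ℝ)))⁻¹ = q ^ ((n:ℝ)) := by
      rw [← Real.rpow_neg hq0.le, neg_neg]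
    have h2' : 1/(A n).re ≤ q ^ ((n:ℝ)) * (1/δ) := by
      calc 1/(A n).re ≤ 1/(q ^ (-(n:ℝ)) * δ) :=
            one_div_le_one_div_of_le (by positivity) hb
        _ = q ^ ((n:ℝ)) * (1/δ) := by rw [one_div, mul_inv, h3, one_div]
    have h4 : (1/(A n).re) ^ s.re ≤ q ^ ((n:ℝ) * s.re) * (1/δ) ^ s.re := by
      calc (1/(A n).re) ^ s.re ≤ (q ^ ((n:ℝ)) * (1/δ)) ^ s.re :=
            Real.rpow_le_rpow (by positivity) h2' hσ.le
        _ = (q ^ ((n:ℝ))) ^ s.re * (1/δ) ^ s.re :=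
            Real.mul_rpow hqnp.le (by positivity)
        _ = q ^ ((n:ℝ) * s.re) * (1/δ) ^ s.re := by rw [← Real.rpow_mul hq0.le]
    have E1 : q ^ (-(ν:ℝ) * ((n:ℝ) + z.re)) = q ^ (-(ν:ℝ)*(n:ℝ)) * q ^ (-(ν:ℝ)*z.re) := by
      rw [← Real.rpow_add hq0]
      congr 1; ring
    have E2 : q ^ (-(ν:ℝ)*(n:ℝ)) * q ^ ((n:ℝ)*s.re) = (q ^ (s.re - (ν:ℝ)))^n := by
      rw [← Real.rpow_add hq0, ← Real.rpow_natCast (q ^ (s.re - (ν:ℝ))) n,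
        ← Real.rpow_mul hq0.le]
      congr 1; ring
    have hΓ : 0 ≤ Real.Gamma s.re := Real.Gamma_nonneg_of_nonneg hσ.le
    calc q ^ (-(ν:ℝ) * ((n:ℝ) + z.re)) * ((1 / (A n).re) ^ s.re * Real.Gamma s.re)
        ≤ q ^ (-(ν:ℝ) * ((n:ℝ) + z.re))
          * ((q ^ ((n:ℝ) * s.re) * (1/δ) ^ s.re) * Real.Gamma s.re) := by
          refine mul_le_mul_of_nonneg_left ?_ (Real.rpow_nonneg hq0.le _)
          exact mul_le_mul_of_nonneg_right h4 hΓ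
      _ = M * (q ^ (-(ν:ℝ)*(n:ℝ)) * q ^ ((n:ℝ)*s.re)) := by rw [E1, hM]; ring
      _ = M * (q ^ (s.re - (ν:ℝ)))^n := by rw [E2]
  -- swap sum and integral
  have hswap := MeasureTheory.hasSum_integral_of_summable_integral_norm hHint hsummable
  have htsum_eq := hswap.tsum_eq
  have hrhs : (∫ t : ℝ in Set.Ioi 0, ∑' n, H n t)
      = ∫ t in Set.Ioi (0:ℝ),
          Complex.exp ((s - (ν:ℂ) - 1) * Real.log t) * Fp q ν (t:ℂ) z := by
    refine MeasureTheory.setIntegral_congr_fun measurableSet_Ioi fun t ht => ?_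
    have ht' : (0:ℝ) < t := ht
    have htne : (t:ℂ) ≠ 0 := Complex.ofReal_ne_zero.mpr (ne_of_gt ht')
    have hpow : Complex.exp ((s - (ν:ℂ) - 1) * (Real.log t:ℂ)) * (t:ℂ)^ν = (t:ℂ)^(s-1) := by
      rw [show s - 1 = (s - (ν:ℂ) - 1) + (ν:ℂ) by ring, Complex.cpow_add _ _ htne,
        Complex.cpow_natCast]
      congr 1
      rw [Complex.cpow_def_of_ne_zero htne, ← Complex.ofReal_log ht'.le, mul_comm]
    rw [Fp, show Complex.exp ((s - (ν:ℂ) - 1) * (Real.log t : ℂ))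
          * ((t:ℂ)^ν * ∑' n, FpTerm q ν (t:ℂ) z n)
        = (Complex.exp ((s - (ν:ℂ) - 1) * (Real.log t:ℂ)) * (t:ℂ)^ν)
          * ∑' n, FpTerm q ν (t:ℂ) z n by ring, hpow, ← tsum_mul_left]
  calc Complex.Gamma s * zetaQ q ν s z
      = ∑' n : ℕ, Complex.Gamma s * (qpow q (((n:ℂ)+z) * (s - (ν:ℂ)))
          * Complex.exp (-s * Complex.log (qbr q ((n:ℂ)+z)))) := by
        rw [zetaQ, tsum_mul_left]
    _ = ∑' n : ℕ, ∫ t : ℝ in Set.Ioi 0, H n t := tsum_congr fun n => (hHval n).symm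
    _ = ∫ t : ℝ in Set.Ioi 0, ∑' n, H n t := htsum_eq
    _ = _ := hrhs
end

section
/- Let 0 < q < 1, let ν be a positive integer, let z ∈ D_q, let t > 0 be real and let ξ ∈ ℝ. Then the integral over η ∈ ℝ of q^{−ν(η+z)}·exp(−t·q^{−(η+z)}·[η+z]_q)·e^{−2πi·η·ξ} converges absolutely and equals −(1/log q)·e^{t/(1−q)}·e^{2πi·ξ·z}·((1−q)/t)^{ν+δξ}·Γ(ν+δξ), where δ := 2πi/log q and ((1−q)/t)^{ν+δξ} := exp((ν+δξ)·ln((1−q)/t)) with the real logarithm ln of the positive number (1−q)/t. -/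
open Complex MeasureTheory Real

open Set Metric

lemma realBound_integrable {σ r : ℝ} (hσ : 0 < σ) (hr : 0 < r) :
    IntegrableOn (fun x : ℝ => x ^ (σ - 1) * Real.exp (-(r * x))) (Ioi 0) := by
  have h := Real.GammaIntegral_convergent hσ
  rw [← mul_zero r, ← integrableOn_Ioi_comp_mul_left_iff _ _ hr] at h
  refine IntegrableOn.congr_fun ((Integrable.const_mul h (r ^ (1 - σ)) : IntegrableOn _ _ _)) (fun x hx => ?_) measurableSet_Ioi
  rw [mem_Ioi] at hx
  rw [Real.mul_rpow hr.le hx.le]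
  rw [show r ^ (1-σ) * (Real.exp (-(r*x)) * (r ^ (σ-1) * x ^ (σ-1)))
      = (r ^ (1-σ) * r ^ (σ-1)) * (x ^ (σ-1) * Real.exp (-(r*x))) by ring,
    ← Real.rpow_add hr]
  norm_num

lemma cGamma_integrable {s c : ℂ} (hs : 0 < s.re) (hc : 0 < c.re) :
    IntegrableOn (fun x : ℝ => (x : ℂ) ^ (s - 1) * Complex.exp (-(c * x))) (Ioi 0) := by
  constructor
  · refine ContinuousOn.aestronglyMeasurable (ContinuousOn.mul ?_ ?_) measurableSet_Ioi
    · apply continuousOn_of_forall_continuousAt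
      intro x hx
      exact (continuousAt_cpow_const <| ofReal_mem_slitPlane.2 hx).comp
        Complex.continuous_ofReal.continuousAt
    · exact (Complex.continuous_exp.comp
        ((continuous_const.mul Complex.continuous_ofReal).neg)).continuousOn
  · rw [← hasFiniteIntegral_norm_iff]
    refine HasFiniteIntegral.congr (realBound_integrable hs hc).2 ?_
    apply (ae_restrict_iff' measurableSet_Ioi).mpr
    filter_upwards with x hx
    rw [norm_mul,
      Complex.norm_cpow_eq_rpow_re_of_pos hx, Complex.norm_exp]
    simp [Complex.mul_re]

lemma cGamma_integral {s : ℂ} (hs : 0 < s.re) {c : ℂ} (hc : 0 < c.re) :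
    ∫ x : ℝ in Ioi 0, (x : ℂ) ^ (s - 1) * Complex.exp (-(c * x))
      = (1 / c) ^ s * Complex.Gamma s := by
  set U : Set ℂ := {c : ℂ | 0 < c.re} with hU_def
  have hUopen : IsOpen U := isOpen_lt continuous_const Complex.continuous_re
  set G : ℂ → ℂ := fun c => ∫ x : ℝ in Ioi 0, (x : ℂ) ^ (s - 1) * Complex.exp (-(c * x))
    with hG_def
  set H : ℂ → ℂ := fun c => (1 / c) ^ s * Complex.Gamma s with hH_def
  have hGdiff : DifferentiableOn ℂ G U := by
    intro c₀ hc₀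
    have hc₀re : 0 < c₀.re := hc₀
    have hεpos : 0 < c₀.re / 2 := by linarith
    have key := hasDerivAt_integral_of_dominated_loc_of_deriv_le (μ := volume.restrict (Ioi 0))
      (F := fun c (x : ℝ) => (x : ℂ) ^ (s - 1) * Complex.exp (-(c * x)))
      (F' := fun c (x : ℝ) => (x : ℂ) ^ (s - 1) * (Complex.exp (-(c * x)) * -(x : ℂ)))
      (x₀ := c₀)
      (bound := fun x : ℝ => x ^ (s.re + 1 - 1) * Real.exp (-(c₀.re / 2 * x)))
      (ball_mem_nhds c₀ hεpos) ?_ (cGamma_integrable hs hc₀re) ?_ ?_ ?_ ?_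
    · exact (key.2.differentiableAt).differentiableWithinAt
    · -- eventual measurability
      filter_upwards [hUopen.mem_nhds hc₀] with c hc
      exact (cGamma_integrable hs hc).aestronglyMeasurable
    · -- measurability of F' c₀
      have h1 := (cGamma_integrable hs hc₀re).aestronglyMeasurable
      have h2 : AEStronglyMeasurable (fun x : ℝ => -(x : ℂ)) (volume.restrict (Ioi 0)) :=
        (Complex.continuous_ofReal.neg).aestronglyMeasurable
      refine (h1.mul h2).congr (Filter.Eventually.of_forall fun x => ?_)
      simp only [Pi.mul_apply]
      ring
    · -- bound
      apply (ae_restrict_iff' measurableSet_Ioi).mpr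
      filter_upwards with x hx
      intro c hcball
      rw [mem_Ioi] at hx
      have hre : c₀.re / 2 < c.re := by
        have := Complex.abs_re_le_norm (c - c₀)
        have hd : dist c c₀ < c₀.re / 2 := mem_ball.mp hcball
        rw [Complex.dist_eq] at hd
        have : |c.re - c₀.re| < c₀.re / 2 := by
          calc |c.re - c₀.re| = |(c - c₀).re| := by rw [Complex.sub_re]
          _ ≤ ‖c - c₀‖ := Complex.abs_re_le_norm _
          _ < c₀.re / 2 := hd
        have := abs_lt.mp this
        linarith [this.1]
      rw [norm_mul, norm_mul, norm_neg,
        Complex.norm_cpow_eq_rpow_re_of_pos hx, Complex.norm_exp,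
        Complex.norm_real, Real.norm_eq_abs, abs_of_pos hx]
      have e1 : x ^ (s - 1).re * (Real.exp ((-(c * ↑x)).re) * x) = x ^ (s.re + 1 - 1) * Real.exp (-(c.re * x)) := by
        rw [show (-(c * (x:ℂ))).re = -(c.re * x) by simp [Complex.mul_re]]
        rw [show s.re + 1 - 1 = (s-1).re + 1 by simp, Real.rpow_add hx, Real.rpow_one]
        ring
      rw [e1]
      have : Real.exp (-(c.re * x)) ≤ Real.exp (-(c₀.re / 2 * x)) := by
        apply Real.exp_le_exp.mpr
        nlinarith
      have hxp : 0 ≤ x ^ (s.re + 1 - 1) := Real.rpow_nonneg hx.le _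
      exact mul_le_mul_of_nonneg_left this hxp
    · exact realBound_integrable (by linarith) hεpos
    · -- differentiability of integrand in c
      apply (ae_restrict_iff' measurableSet_Ioi).mpr
      filter_upwards with x hx
      intro c hcball
      have h1 : HasDerivAt (fun c : ℂ => -(c * (x:ℂ))) (-(x:ℂ)) c := by
        have := ((hasDerivAt_id c).mul_const (x:ℂ)).neg; simp only [one_mul] at this; exact this
      exact (h1.cexp).const_mul ((x:ℂ) ^ (s - 1))
  have hHdiff : DifferentiableOn ℂ H U := by
    intro c hc
    have hcre : 0 < c.re := hc
    have hcne : c ≠ 0 := by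
      intro h; rw [h] at hcre; simp at hcre
    have hslit : (1 / c) ∈ Complex.slitPlane := by
      rw [Complex.mem_slitPlane_iff]
      left
      rw [one_div, Complex.inv_re]
      have : 0 < Complex.normSq c := Complex.normSq_pos.mpr hcne
      positivity
    have hd : DifferentiableAt ℂ (fun c : ℂ => (1 / c) ^ s) c := by
      have hdiv : DifferentiableAt ℂ (fun c : ℂ => 1 / c) c :=
        (differentiableAt_const 1).div differentiableAt_id hcne
      exact hdiv.cpow (differentiableAt_const s) hslit
    exact (hd.mul_const (Complex.Gamma s)).differentiableWithinAt
  -- identity theorem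
  have hAG : AnalyticOnNhd ℂ G U := hGdiff.analyticOnNhd hUopen
  have hAH : AnalyticOnNhd ℂ H U := hHdiff.analyticOnNhd hUopen
  have hpre : IsPreconnected U := (convex_halfSpace_re_gt 0).isPreconnected
  have h1U : (1 : ℂ) ∈ U := by simp [hU_def]
  have hfreq : ∃ᶠ w in nhdsWithin (1 : ℂ) {(1:ℂ)}ᶜ, G w = H w := by
    have htend : Filter.Tendsto (fun n : ℕ => ((1 + (1 / (n + 1)) : ℝ) : ℂ)) Filter.atTop
        (nhdsWithin (1 : ℂ) {(1:ℂ)}ᶜ) := by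
      apply tendsto_nhdsWithin_of_tendsto_nhds_of_eventually_within
      · have : Filter.Tendsto (fun n : ℕ => (1 + 1 / ((n:ℝ) + 1) : ℝ)) Filter.atTop (nhds 1) := by
          have h0 := tendsto_one_div_add_atTop_nhds_zero_nat (𝕜 := ℝ)
          simpa using (tendsto_const_nhds (x := (1:ℝ))).add h0
        have h2 := (Complex.continuous_ofReal.tendsto (1:ℝ)).comp this
        refine Filter.Tendsto.congr (fun n => ?_) (by simpa using h2)
        simp only [Function.comp_apply]
        push_cast
        ring
      · filter_upwards with n
        simp only [Set.mem_compl_iff, Set.mem_singleton_iff]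
        intro h
        have : (1 + 1 / ((n:ℝ) + 1) : ℝ) = 1 := by exact_mod_cast h
        have hpos : 0 < 1 / ((n:ℝ) + 1) := by positivity
        linarith
    apply htend.frequently
    apply Filter.Frequently.of_forall
    intro n
    have hr : (0:ℝ) < 1 + 1 / ((n:ℝ) + 1) := by positivity
    have := Complex.integral_cpow_mul_exp_neg_mul_Ioi hs hr
    simp only [hG_def, hH_def]
    rw [← this]
  exact hAG.eqOn_of_preconnected_of_frequently_eq hAH hpre h1U hfreq hc

lemma subst_lemma {b : ℝ} (hb : 0 < b) {s c : ℂ} (hs : 0 < s.re) (hc : 0 < c.re) :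
    Integrable (fun η : ℝ =>
      Complex.exp (s * ((b : ℂ) * (η : ℂ))) * Complex.exp (-(c * (Real.exp (b * η) : ℝ)))) ∧
    ∫ η : ℝ, Complex.exp (s * ((b : ℂ) * (η : ℂ))) * Complex.exp (-(c * (Real.exp (b * η) : ℝ)))
      = ((b : ℂ))⁻¹ * ((1 / c) ^ s * Complex.Gamma s) := by
  set X : ℝ → ℂ := fun η =>
    Complex.exp (s * ((b : ℂ) * (η : ℂ))) * Complex.exp (-(c * (Real.exp (b * η) : ℝ)))
    with hX_def
  set f : ℝ → ℝ := fun η => Real.exp (b * η) with hf_def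
  set f' : ℝ → ℝ := fun η => Real.exp (b * η) * b with hf'_def
  set g : ℝ → ℂ := fun x => (x : ℂ) ^ (s - 1) * Complex.exp (-(c * x)) with hg_def
  have hf' : ∀ η ∈ (univ : Set ℝ), HasDerivWithinAt f (f' η) univ η := by
    intro η _
    simpa using (((hasDerivAt_id η).const_mul b).exp).hasDerivWithinAt (s := univ)
  have hinj : InjOn f univ := by
    intro a _ a' _ h
    have := Real.exp_injective h
    exact mul_left_cancel₀ hb.ne' this
  have himg : f '' univ = Ioi 0 := by
    rw [image_univ]
    ext y
    constructor
    · rintro ⟨η, rfl⟩; exact Real.exp_pos _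
    · intro hy
      exact ⟨Real.log y / b, by
        rw [hf_def]; simp only
        rw [mul_div_cancel₀ _ hb.ne', Real.exp_log hy]⟩
  have hkey : ∀ η : ℝ, |f' η| • g (f η) = (b : ℝ) • X η := by
    intro η
    have hxpos : (0:ℝ) < Real.exp (b * η) := Real.exp_pos _
    have habs : |f' η| = Real.exp (b * η) * b := by
      rw [hf'_def]; exact abs_of_pos (by positivity)
    have hcpow : ((Real.exp (b * η) : ℝ) : ℂ) ^ (s - 1)
        = Complex.exp (((b * η : ℝ) : ℂ) * (s - 1)) := by
      rw [Complex.cpow_def_of_ne_zero (by exact_mod_cast hxpos.ne')]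
      congr 1
      rw [← Complex.ofReal_log hxpos.le, Real.log_exp]
    rw [habs, hg_def, hf_def]
    simp only
    rw [hcpow, real_smul, real_smul, Complex.ofReal_mul, hX_def]
    simp only
    have hmerge : Complex.exp ((b*η : ℝ) : ℂ) * Complex.exp (((b*η : ℝ):ℂ) * (s-1))
        = Complex.exp (s * ((b:ℂ)*(η:ℂ))) := by
      rw [← Complex.exp_add]; congr 1; push_cast; ring
    rw [show ((Real.exp (b*η) : ℝ) : ℂ) = Complex.exp ((b*η : ℝ) : ℂ) from Complex.ofReal_exp _]
    linear_combination (b:ℂ) * Complex.exp (-(c * Complex.exp ((b*η : ℝ):ℂ))) * hmerge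
  have hint : IntegrableOn g (Ioi 0) := cGamma_integrable hs hc
  rw [← himg, integrableOn_image_iff_integrableOn_abs_deriv_smul MeasurableSet.univ hf' hinj g,
    integrableOn_univ] at hint
  have hintX : Integrable (fun η => (b:ℝ) • X η) := by
    refine hint.congr (Filter.Eventually.of_forall fun η => hkey η)
  have hX_int : Integrable X := by
    have := hintX.smul (b⁻¹ : ℝ)
    refine this.congr (Filter.Eventually.of_forall fun η => ?_)
    simp only [Pi.smul_apply]
    rw [smul_smul, inv_mul_cancel₀ hb.ne', one_smul]
  refine ⟨hX_int, ?_⟩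
  have hval := cGamma_integral hs hc
  rw [← himg, integral_image_eq_integral_abs_deriv_smul MeasurableSet.univ hf' hinj g] at hval
  rw [Measure.restrict_univ] at hval
  rw [show (fun η => |f' η| • g (f η)) = fun η => (b:ℝ) • X η from funext hkey] at hval
  rw [integral_smul] at hval
  -- hval : (b:ℝ) • ∫ X = (1/c)^s * Γ s
  have : ∫ η, X η = ((b:ℝ))⁻¹ • ((1 / c) ^ s * Complex.Gamma s) := by
    rw [← hval, smul_smul, inv_mul_cancel₀ hb.ne', one_smul]
  rw [this, real_smul, Complex.ofReal_inv]

lemma key_pointwise (q t : ℝ) (hq0 : 0 < q) (hq1 : q < 1) (ht : 0 < t) (ν : ℕ) (ξ : ℝ)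
    (z : ℂ) (η : ℝ) :
    qpow q (-(ν : ℂ) * ((η : ℂ) + z)) *
        Complex.exp (-(t : ℂ) * qpow q (-((η : ℂ) + z)) * qbr q ((η : ℂ) + z)) *
        Complex.exp (-(2 * Real.pi * Complex.I * η * ξ)) =
      (Complex.exp ((t : ℂ) / (1 - (q : ℂ))) *
          Complex.exp (-((ν : ℂ) * (Real.log q : ℂ) * z))) *
      (Complex.exp (((ν : ℂ) + (2 * Real.pi * Complex.I / (Real.log q : ℂ)) * ξ) *
            (((-Real.log q : ℝ) : ℂ) * (η : ℂ))) *
        Complex.exp (-(Complex.exp ((Real.log (t / (1 - q)) : ℂ) - (Real.log q : ℂ) * z) *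
            ((Real.exp (-Real.log q * η) : ℝ) : ℂ)))) := by
  have hq1' : (0:ℝ) < 1 - q := by linarith
  have hL : Real.log q < 0 := Real.log_neg hq0 hq1
  have hLne : (Real.log q : ℂ) ≠ 0 := by exact_mod_cast hL.ne
  have hqne : (1:ℂ) - (q:ℂ) ≠ 0 := by
    rw [sub_ne_zero]
    exact_mod_cast hq1.ne'
  have hrho : Complex.exp ((Real.log (t/(1-q)) : ℂ)) = (t:ℂ)/(1 - (q:ℂ)) := by
    rw [← Complex.ofReal_exp, Real.exp_log (div_pos ht hq1')]
    push_cast; ring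
  have hC : Complex.exp ((Real.log (t/(1-q)) : ℂ) - (Real.log q : ℂ) * z)
      * ((Real.exp (-Real.log q * η) : ℝ) : ℂ)
      = Complex.exp ((Real.log (t/(1-q)) : ℂ) - (Real.log q : ℂ) * z
          + ((-Real.log q * η : ℝ) : ℂ)) := by
    rw [Complex.ofReal_exp, ← Complex.exp_add]
  have hM2 : -(t : ℂ) * qpow q (-((η : ℂ) + z)) * qbr q ((η : ℂ) + z)
      = (t:ℂ)/(1 - (q:ℂ)) - Complex.exp ((Real.log (t/(1-q)) : ℂ) - (Real.log q : ℂ) * z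
          + ((-Real.log q * η : ℝ) : ℂ)) := by
    rw [qbr, qpow, qpow]
    have e1 : Complex.exp ((Real.log (t/(1-q)) : ℂ) - (Real.log q : ℂ) * z
          + ((-Real.log q * η : ℝ) : ℂ))
        = ((t:ℂ)/(1 - (q:ℂ))) * Complex.exp (-(((η:ℂ) + z) * (Real.log q : ℂ))) := by
      rw [← hrho, ← Complex.exp_add]
      congr 1
      push_cast
      ring
    rw [e1, show (-((η:ℂ)+z)) * ((Real.log q : ℝ) : ℂ) = -(((η:ℂ)+z) * (Real.log q : ℂ)) by ring,
      Complex.exp_neg]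
    have hEexp : Complex.exp (((η:ℂ) + z) * (Real.log q : ℂ)) ≠ 0 := Complex.exp_ne_zero _
    field_simp
    ring
  rw [hM2, hC, qpow]
  simp only [← Complex.exp_add]
  congr 1
  field_simp
  push_cast
  ring

theorem stmt7 (q : ℝ) (hq0 : 0 < q) (hq1 : q < 1) (ν : ℕ) (hν : 0 < ν)
    (z : ℂ) (hz : |z.im| < Real.pi / (2 * |Real.log q|))
    (t : ℝ) (ht : 0 < t) (ξ : ℝ) :
    Integrable (fun η : ℝ =>
      qpow q (-(ν : ℂ) * ((η : ℂ) + z)) *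
        Complex.exp (-(t : ℂ) * qpow q (-((η : ℂ) + z)) * qbr q ((η : ℂ) + z)) *
        Complex.exp (-(2 * Real.pi * Complex.I * η * ξ))) ∧
    (∫ η : ℝ,
      qpow q (-(ν : ℂ) * ((η : ℂ) + z)) *
        Complex.exp (-(t : ℂ) * qpow q (-((η : ℂ) + z)) * qbr q ((η : ℂ) + z)) *
        Complex.exp (-(2 * Real.pi * Complex.I * η * ξ))) =
      -(1 / (Real.log q : ℂ)) * Complex.exp ((t : ℂ) / (1 - (q : ℂ))) *
        Complex.exp (2 * Real.pi * Complex.I * ξ * z) *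
        Complex.exp (((ν : ℂ) + (2 * Real.pi * Complex.I / (Real.log q : ℂ)) * ξ) *
          Real.log ((1 - q) / t)) *
        Complex.Gamma ((ν : ℂ) + (2 * Real.pi * Complex.I / (Real.log q : ℂ)) * ξ) := by
  have hq1' : (0:ℝ) < 1 - q := by linarith
  have hL : Real.log q < 0 := Real.log_neg hq0 hq1
  have hLne : (Real.log q : ℂ) ≠ 0 := by exact_mod_cast hL.ne
  have hb : (0:ℝ) < -Real.log q := by linarith
  have hπ := Real.pi_pos
  -- real part of s
  have hs : (0:ℝ) < ((ν : ℂ) + (2 * Real.pi * Complex.I / (Real.log q : ℂ)) * ξ).re := by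
    have h0 : ((2 * (Real.pi:ℂ) * Complex.I / (Real.log q : ℂ)) * (ξ:ℂ)).re = 0 := by
      rw [show (2 * (Real.pi:ℂ) * Complex.I / (Real.log q : ℂ)) * (ξ:ℂ)
          = ((2 * Real.pi / Real.log q * ξ : ℝ) : ℂ) * Complex.I by push_cast; ring]
      simp
    rw [Complex.add_re, h0, add_zero, Complex.natCast_re]
    exact_mod_cast hν
  -- imaginary part bound for w
  have him : |Real.log q * z.im| < Real.pi / 2 := by
    rw [abs_mul]
    have h1 : 0 < |Real.log q| := abs_pos.mpr hL.ne
    calc |Real.log q| * |z.im| < |Real.log q| * (Real.pi / (2 * |Real.log q|)) :=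
          mul_lt_mul_of_pos_left hz h1
      _ = Real.pi / 2 := by field_simp
  have him' := abs_lt.mp him
  have hwim : ((Real.log (t/(1-q)) : ℂ) - (Real.log q : ℂ) * z).im = -(Real.log q * z.im) := by
    simp [Complex.sub_im, Complex.mul_im]
  -- positivity of Re c
  have hc : 0 < (Complex.exp ((Real.log (t/(1-q)) : ℂ) - (Real.log q : ℂ) * z)).re := by
    rw [Complex.exp_re, hwim]
    have hcos : 0 < Real.cos (-(Real.log q * z.im)) := by
      apply Real.cos_pos_of_mem_Ioo
      exact ⟨by linarith [him'.2], by linarith [him'.1]⟩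
    positivity
  obtain ⟨hXint, hXval⟩ := subst_lemma hb hs hc
  have hfeq : (fun η : ℝ =>
      qpow q (-(ν : ℂ) * ((η : ℂ) + z)) *
        Complex.exp (-(t : ℂ) * qpow q (-((η : ℂ) + z)) * qbr q ((η : ℂ) + z)) *
        Complex.exp (-(2 * Real.pi * Complex.I * η * ξ))) =
      fun η : ℝ =>
      (Complex.exp ((t : ℂ) / (1 - (q : ℂ))) *
          Complex.exp (-((ν : ℂ) * (Real.log q : ℂ) * z))) *
      (Complex.exp (((ν : ℂ) + (2 * Real.pi * Complex.I / (Real.log q : ℂ)) * ξ) *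
            (((-Real.log q : ℝ) : ℂ) * (η : ℂ))) *
        Complex.exp (-(Complex.exp ((Real.log (t / (1 - q)) : ℂ) - (Real.log q : ℂ) * z) *
            ((Real.exp (-Real.log q * η) : ℝ) : ℂ)))) :=
    funext fun η => key_pointwise q t hq0 hq1 ht ν ξ z η
  constructor
  · rw [hfeq]
    exact hXint.const_mul _
  · rw [hfeq, MeasureTheory.integral_const_mul, hXval]
    -- now pure algebra
    have hw : (1 / Complex.exp ((Real.log (t/(1-q)) : ℂ) - (Real.log q : ℂ) * z))
          ^ ((ν : ℂ) + (2 * Real.pi * Complex.I / (Real.log q : ℂ)) * ξ)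
        = Complex.exp (-(((ν : ℂ) + (2 * Real.pi * Complex.I / (Real.log q : ℂ)) * ξ) *
            ((Real.log (t/(1-q)) : ℂ) - (Real.log q : ℂ) * z))) := by
      rw [one_div, ← Complex.exp_neg,
        Complex.cpow_def_of_ne_zero (Complex.exp_ne_zero _),
        Complex.log_exp (by rw [Complex.neg_im, hwim]; simp; linarith [him'.2]
          : -Real.pi < (-((Real.log (t/(1-q)) : ℂ) - (Real.log q : ℂ) * z)).im)
          (by rw [Complex.neg_im, hwim]; simp; linarith [him'.1])]
      congr 1
      ring
    rw [hw]
    have hlogC : ((Real.log ((1-q)/t) : ℝ) : ℂ) = -(Real.log (t/(1-q)) : ℂ) := by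
      have : Real.log ((1-q)/t) = -Real.log (t/(1-q)) := by
        rw [← Real.log_inv, inv_div]
      rw [this]; push_cast; ring
    rw [hlogC]
    have hbinv : (((-Real.log q : ℝ)) : ℂ)⁻¹ = -(1 / (Real.log q : ℂ)) := by
      push_cast
      rw [one_div, inv_neg]
    rw [hbinv]
    have hEXP : Complex.exp (-((ν : ℂ) * (Real.log q : ℂ) * z)) *
        Complex.exp (-(((ν : ℂ) + (2 * Real.pi * Complex.I / (Real.log q : ℂ)) * ξ) *
            ((Real.log (t/(1-q)) : ℂ) - (Real.log q : ℂ) * z)))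
        = Complex.exp (2 * Real.pi * Complex.I * ξ * z) *
          Complex.exp (((ν : ℂ) + (2 * Real.pi * Complex.I / (Real.log q : ℂ)) * ξ) *
            -(Real.log (t/(1-q)) : ℂ)) := by
      rw [← Complex.exp_add, ← Complex.exp_add]
      congr 1
      field_simp
      ring
    linear_combination (-(1 / (Real.log q : ℂ))) * Complex.exp ((t : ℂ) / (1 - (q : ℂ))) *
      Complex.Gamma ((ν : ℂ) + (2 * Real.pi * Complex.I / (Real.log q : ℂ)) * ξ) * hEXP
end

section
/- Let 0 < q < 1, let ν be a positive integer, let 0 < a < ∞, let m ∈ ℤ and let l be an integer with l ≥ −ν. Then for every s ∈ ℂ with Re(s) > ν, φ_m^{(ν)}(s;a,q) = Σ_{j=1}^{l+ν+1} (1/(s−ν−mδ)_j)·((−1)^{j−1}/(1−q)^{j−1})·a^{s−ν−mδ+j−1}·e^{a/(1−q)} + (1/(s−ν−mδ)_{l+ν+1})·((−1)^{l+ν+1}/(1−q)^{l+ν+1})·φ_m^{(ν)}(s+l+ν+1;a,q), where (w)_j := w(w+1)⋯(w+j−1) denotes the Pochhammer symbol and a^{w} := exp(w·ln a) with the real logarithm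 ln a. -/
open Complex MeasureTheory

/-- `δ := 2πi / log q`. -/
noncomputable def qdelta (q : ℝ) : ℂ := 2 * Real.pi * Complex.I / (Real.log q : ℂ)

/-- `φ_m^{(ν)}(s;a,q) := ∫_0^a t^{s−ν−1−mδ} e^{t/(1−q)} dt`, where
`t^w := exp(w · ln t)` for real `t > 0`. -/
noncomputable def phiQ (q : ℝ) (ν : ℕ) (m : ℤ) (a : ℝ) (s : ℂ) : ℂ :=
  ∫ t in Set.Ioo (0 : ℝ) a,
    Complex.exp ((s - (ν : ℂ) - 1 - (m : ℂ) * qdelta q) * Real.log t) *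
      Complex.exp ((t : ℂ) / (1 - (q : ℂ)))

open Set Filter

lemma myInteg (y c : ℂ) (hy : -1 < y.re) (a : ℝ) (ha : 0 < a) :
    IntegrableOn (fun t : ℝ => Complex.exp (y * Real.log t) * Complex.exp (c * t))
      (Set.Ioo 0 a) := by
  have hmeas : AEStronglyMeasurable
      (fun t : ℝ => Complex.exp (y * Real.log t) * Complex.exp (c * t))
      (volume.restrict (Set.Ioo 0 a)) := by
    apply ContinuousOn.aestronglyMeasurable _ measurableSet_Ioo
    apply ContinuousOn.mul
    · apply Continuous.comp_continuousOn Complex.continuous_exp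
      apply ContinuousOn.mul continuousOn_const
      exact Complex.continuous_ofReal.comp_continuousOn
        (Real.continuousOn_log.mono (fun t ht => ne_of_gt ht.1))
    · exact (Complex.continuous_exp.comp (continuous_const.mul Complex.continuous_ofReal)).continuousOn
  have hbound : IntegrableOn (fun t : ℝ => Real.exp (|c.re| * a) * t ^ y.re) (Set.Ioo 0 a) := by
    have := (intervalIntegral.intervalIntegrable_rpow' (a := 0) (b := a) hy).1
    exact (this.mono_set Set.Ioo_subset_Ioc_self).const_mul _
  refine hbound.integrable.mono' hmeas ?_
  filter_upwards [ae_restrict_mem measurableSet_Ioo] with t ht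
  rw [norm_mul, Complex.norm_exp, Complex.norm_exp]
  have h1 : (y * (Real.log t : ℂ)).re = y.re * Real.log t := by simp
  have h2 : (c * (t : ℂ)).re = c.re * t := by simp
  rw [h1, h2, mul_comm y.re, ← Real.rpow_def_of_pos ht.1, mul_comm]
  gcongr
  exacts [(Real.rpow_pos_of_pos ht.1 _).le, ht.1.le, le_abs_self _, ht.2.le]

lemma myStep (c : ℂ) (a : ℝ) (ha : 0 < a) (x : ℂ) (hx : 0 < (x + 1).re) :
    ∫ t in Set.Ioo (0:ℝ) a, Complex.exp (x * Real.log t) * Complex.exp (c * t) =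
      Complex.exp ((x+1) * Real.log a) / (x+1) * Complex.exp (c * a)
      - c/(x+1) * ∫ t in Set.Ioo (0:ℝ) a, Complex.exp ((x+1) * Real.log t) * Complex.exp (c * t) := by
  have hx1 : (x + 1) ≠ 0 := fun h => by simp [h] at hx
  set f : ℝ → ℂ := fun t => (x+1)⁻¹ * (Complex.exp ((x+1) * Real.log t) * Complex.exp (c * t))
    with hf
  set g1 : ℝ → ℂ := fun t => Complex.exp (x * Real.log t) * Complex.exp (c * t) with hg1
  set g2 : ℝ → ℂ := fun t => Complex.exp ((x+1) * Real.log t) * Complex.exp (c * t) with hg2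
  set f' : ℝ → ℂ := fun t => g1 t + c/(x+1) * g2 t with hf'
  have hderiv : ∀ t ∈ Set.Ioo (0:ℝ) a, HasDerivAt f (f' t) t := by
    intro t ht
    have ht0 : (0:ℝ) < t := ht.1
    have hlog : HasDerivAt (fun u : ℝ => ((Real.log u : ℝ) : ℂ)) (↑(t⁻¹) : ℂ) t :=
      (Real.hasDerivAt_log ht0.ne').ofReal_comp
    have h2 : HasDerivAt (fun u : ℝ => Complex.exp ((x+1) * Real.log u))
        (Complex.exp ((x+1) * Real.log t) * ((x+1) * (↑(t⁻¹) : ℂ))) t :=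
      (hlog.const_mul (x+1)).cexp
    have h3 : HasDerivAt (fun u : ℝ => Complex.exp (c * u))
        (Complex.exp (c * t) * (c * 1)) t := by
      have : HasDerivAt (fun u : ℝ => ((u:ℝ):ℂ)) ((1:ℝ):ℂ) t := (hasDerivAt_id t).ofReal_comp
      exact (this.const_mul c).cexp
    have hmul := (h2.mul h3).const_mul ((x+1)⁻¹)
    have hkey : Complex.exp ((x+1) * Real.log t) = Complex.exp (x * Real.log t) * t := by
      have : ((t:ℝ):ℂ) = Complex.exp ((Real.log t : ℝ) : ℂ) := by
        rw [← Complex.ofReal_exp, Real.exp_log ht0]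
      rw [this, ← Complex.exp_add]; ring_nf
    refine HasDerivAt.congr_deriv hmul ?_
    rw [hf', hg1, hg2]
    have htne : (t:ℂ) ≠ 0 := Complex.ofReal_ne_zero.mpr ht0.ne'
    simp only [hkey, Complex.ofReal_inv]
    field_simp
  have hxre : -1 < x.re := by
    have : (x+1).re = x.re + 1 := by simp
    linarith [hx, this]
  have hx1re : -1 < (x+1).re := by linarith
  have hi1 := myInteg x c hxre a ha
  have hi2 := myInteg (x+1) c hx1re a ha
  have hint : IntervalIntegrable f' volume 0 a := by
    rw [intervalIntegrable_iff_integrableOn_Ioc_of_le ha.le]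
    have : IntegrableOn f' (Set.Ioo 0 a) := hi1.add (hi2.const_mul (c/(x+1)))
    exact this.congr_set_ae (MeasureTheory.Ioo_ae_eq_Ioc (α := ℝ) (a := 0) (b := a)).symm
  have htend0 : Tendsto f (nhdsWithin 0 (Set.Ioi 0)) (nhds 0) := by
    have hA : Tendsto (fun t : ℝ => Complex.exp ((x+1) * Real.log t))
        (nhdsWithin 0 (Set.Ioi 0)) (nhds 0) := by
      rw [tendsto_zero_iff_norm_tendsto_zero]
      have hnorm : ∀ t : ℝ, ‖Complex.exp ((x+1) * Real.log t)‖
          = Real.exp ((x+1).re * Real.log t) := by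
        intro t
        rw [Complex.norm_exp]
        congr 1
        simp
      simp only [hnorm]
      have h1 : Tendsto (fun t : ℝ => (x+1).re * Real.log t)
          (nhdsWithin 0 (Set.Ioi 0)) atBot :=
        (Real.tendsto_log_nhdsGT_zero).const_mul_atBot hx
      exact Real.tendsto_exp_atBot.comp h1
    have hB : Tendsto (fun t : ℝ => Complex.exp (c * t))
        (nhdsWithin 0 (Set.Ioi 0)) (nhds (Complex.exp (c * (0:ℝ)))) := by
      exact ((Complex.continuous_exp.comp
        (continuous_const.mul Complex.continuous_ofReal)).tendsto _).mono_left nhdsWithin_le_nhds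
    have := (hA.mul hB).const_mul ((x+1)⁻¹)
    simpa using this
  have htenda : Tendsto f (nhdsWithin a (Set.Iio a)) (nhds (f a)) := by
    have : ContinuousAt f a := by
      apply ContinuousAt.mul continuousAt_const
      apply ContinuousAt.mul
      · exact (Complex.continuous_exp.continuousAt).comp
          ((continuousAt_const.mul (Complex.continuous_ofReal.continuousAt.comp
            (Real.continuousAt_log ha.ne'))))
      · exact (Complex.continuous_exp.comp (continuous_const.mul Complex.continuous_ofReal)).continuousAt
    exact this.continuousWithinAt.tendsto
  have hFTC := intervalIntegral.integral_eq_sub_of_hasDerivAt_of_tendsto ha hderiv hint htend0 htenda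
  rw [intervalIntegral.integral_of_le ha.le, MeasureTheory.integral_Ioc_eq_integral_Ioo] at hFTC
  have hsplit : ∫ t in Set.Ioo (0:ℝ) a, f' t
      = (∫ t in Set.Ioo (0:ℝ) a, g1 t) + (c/(x+1)) * ∫ t in Set.Ioo (0:ℝ) a, g2 t := by
    rw [MeasureTheory.integral_add hi1 (hi2.const_mul (c/(x+1))),
      MeasureTheory.integral_const_mul]
  rw [hsplit] at hFTC
  have : (∫ t in Set.Ioo (0:ℝ) a, g1 t) = f a - 0 - (c/(x+1)) * ∫ t in Set.Ioo (0:ℝ) a, g2 t := by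
    rw [← hFTC]; ring
  rw [this, hf]
  field_simp
  ring

lemma pochNe (w : ℂ) (hw : 0 < w.re) (n : ℕ) : (ascPochhammer ℂ n).eval w ≠ 0 := by
  induction n with
  | zero => simp
  | succ k ih =>
    rw [ascPochhammer_succ_eval]
    refine mul_ne_zero ih ?_
    intro h
    have : (w + (k:ℂ)).re = w.re + k := by simp
    rw [h] at this
    simp at this
    have : (0:ℝ) ≤ (k:ℝ) := Nat.cast_nonneg k
    linarith [hw]

lemma myRec (d : ℂ) (hd : d ≠ 0) (a : ℝ) (ha : 0 < a) (w : ℂ) (hw : 0 < w.re) (n : ℕ) :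
    (∫ t in Set.Ioo (0:ℝ) a, Complex.exp ((w - 1) * Real.log t) * Complex.exp (d⁻¹ * t)) =
    (∑ j ∈ Finset.Icc 1 n, (1/(ascPochhammer ℂ j).eval w) * ((-1)^(j-1)/d^(j-1)) *
        Complex.exp ((w + j - 1) * Real.log a) * Complex.exp (d⁻¹ * a))
    + (1/(ascPochhammer ℂ n).eval w) * ((-1)^n / d^n) *
        ∫ t in Set.Ioo (0:ℝ) a, Complex.exp ((w + n - 1) * Real.log t) * Complex.exp (d⁻¹ * t) := by
  induction n with
  | zero => simp
  | succ k ih =>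
    rw [Finset.sum_Icc_succ_top (by omega : 1 ≤ k + 1), ih]
    have hwk : (0:ℝ) < (w + (k:ℂ)).re := by
      have : (w + (k:ℂ)).re = w.re + k := by simp
      rw [this]
      have : (0:ℝ) ≤ (k:ℝ) := Nat.cast_nonneg k
      linarith
    have hwkne : w + (k:ℂ) ≠ 0 := fun h => by rw [h] at hwk; simp at hwk
    have e1 : w + (k:ℂ) - 1 + 1 = w + (k:ℂ) := by ring
    have hstep := myStep d⁻¹ a ha (w + (k:ℂ) - 1) (by rw [e1]; exact hwk)
    rw [e1] at hstep
    rw [hstep]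
    have hP : (ascPochhammer ℂ (k+1)).eval w = (ascPochhammer ℂ k).eval w * (w + k) :=
      ascPochhammer_succ_eval k w
    have hPk := pochNe w hw k
    have ecast : ((k:ℂ)+1) = ((k+1 : ℕ) : ℂ) := by push_cast; ring
    have e2 : w + ((k+1:ℕ):ℂ) - 1 = w + (k:ℂ) := by push_cast; ring
    rw [hP, e2]
    simp only [Nat.add_sub_cancel, pow_succ]
    set u := w + (k:ℂ) with hu
    set I := ∫ t in Set.Ioo (0:ℝ) a, Complex.exp ((w + (k:ℂ)) * Real.log t) * Complex.exp (d⁻¹ * t) with hI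
    set A := Complex.exp ((w + (k:ℂ)) * Real.log a) with hA
    set E := Complex.exp (d⁻¹ * (a:ℝ)) with hE
    set S := ∑ j ∈ Finset.Icc 1 k, (1/(ascPochhammer ℂ j).eval w) * ((-1)^(j-1)/d^(j-1)) *
        Complex.exp ((w + j - 1) * Real.log a) * E with hS
    set P := (ascPochhammer ℂ k).eval w with hPdef
    set D := d ^ k with hDdef
    have hDne : D ≠ 0 := by rw [hDdef]; exact pow_ne_zero k hd
    clear_value u I A E S P D
    rw [add_assoc]
    congr 1
    field_simp
    ring

theorem stmt9 (q : ℝ) (hq0 : 0 < q) (hq1 : q < 1) (ν : ℕ) (hν : 0 < ν)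
    (a : ℝ) (ha : 0 < a) (m : ℤ) (l : ℤ) (hl : -(ν : ℤ) ≤ l)
    (s : ℂ) (hs : (ν : ℝ) < s.re) :
    phiQ q ν m a s =
      (∑ j ∈ Finset.Icc 1 (l + ν + 1).toNat,
        (1 / (ascPochhammer ℂ j).eval (s - (ν : ℂ) - (m : ℂ) * qdelta q)) *
          ((-1) ^ (j - 1) / (1 - (q : ℂ)) ^ (j - 1)) *
          Complex.exp ((s - (ν : ℂ) - (m : ℂ) * qdelta q + (j : ℂ) - 1) * Real.log a) *
          Complex.exp ((a : ℂ) / (1 - (q : ℂ)))) +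
      (1 / (ascPochhammer ℂ (l + ν + 1).toNat).eval (s - (ν : ℂ) - (m : ℂ) * qdelta q)) *
        ((-1) ^ (l + ν + 1).toNat / (1 - (q : ℂ)) ^ (l + ν + 1).toNat) *
        phiQ q ν m a (s + (l : ℂ) + (ν : ℂ) + 1) := by
  set n : ℕ := (l + ν + 1).toNat with hn_def
  have hnc : ((n : ℕ) : ℂ) = (l : ℂ) + (ν : ℂ) + 1 := by
    have h0 : ((n : ℕ) : ℤ) = l + ν + 1 := Int.toNat_of_nonneg (by omega)
    have := congrArg (fun z : ℤ => (z : ℂ)) h0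
    push_cast at this
    exact this
  set w := s - (ν : ℂ) - (m : ℂ) * qdelta q with hw_def
  set d := 1 - (q : ℂ) with hd_def
  have hdne : d ≠ 0 := by
    have h1 : ((1 - q : ℝ) : ℂ) ≠ 0 := Complex.ofReal_ne_zero.mpr (by linarith)
    rw [hd_def]
    intro h
    apply h1
    push_cast
    exact h
  have hdelta_re : ((m : ℂ) * qdelta q).re = 0 := by
    simp [qdelta, Complex.div_re]
  have hwre : 0 < w.re := by
    rw [hw_def]
    simp only [Complex.sub_re, Complex.natCast_re, hdelta_re]
    linarith
  have hEa : d⁻¹ * ((a : ℝ) : ℂ) = (a : ℂ) / d := (div_eq_inv_mul _ _).symm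
  have h1 : phiQ q ν m a s
      = ∫ t in Set.Ioo (0:ℝ) a, Complex.exp ((w - 1) * Real.log t) * Complex.exp (d⁻¹ * t) := by
    unfold phiQ
    have hptw : ∀ t : ℝ,
        Complex.exp ((s - (ν : ℂ) - 1 - (m : ℂ) * qdelta q) * Real.log t) *
          Complex.exp ((t : ℂ) / (1 - (q : ℂ)))
        = Complex.exp ((w - 1) * Real.log t) * Complex.exp (d⁻¹ * t) := by
      intro t
      rw [hw_def, hd_def, div_eq_inv_mul]
      congr 2
      ring
    simp only [hptw]
  have h2 : phiQ q ν m a (s + (l : ℂ) + (ν : ℂ) + 1)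
      = ∫ t in Set.Ioo (0:ℝ) a, Complex.exp ((w + (n : ℂ) - 1) * Real.log t)
          * Complex.exp (d⁻¹ * t) := by
    unfold phiQ
    have hptw : ∀ t : ℝ,
        Complex.exp ((s + (l : ℂ) + (ν : ℂ) + 1 - (ν : ℂ) - 1 - (m : ℂ) * qdelta q) * Real.log t) *
          Complex.exp ((t : ℂ) / (1 - (q : ℂ)))
        = Complex.exp ((w + (n : ℂ) - 1) * Real.log t) * Complex.exp (d⁻¹ * t) := by
      intro t
      rw [hw_def, hd_def, div_eq_inv_mul, hnc]
      congr 2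
      ring
    simp only [hptw]
  rw [h1, myRec d hdne a ha w hwre n, ← hEa]
  rw [← h2]
end
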